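/- arXiv:0807.0385 — 6 statements merged into one kernel-verified Lean document; each statement's English description precedes it below -/
import Mathlib

section
/- Let Φ be a Leonard system with parameter array ({θ_i}; {θ_i*}; {φ_i}; {ϕ_i}) and define ϑ_i = Σ_{ℓ=0}^{i-1} (θ_ℓ − θ_{d−ℓ})/(θ_0 − θ_d) for 1 ≤ i ≤ d. Then φ_i − ϕ_i = (θ_i* − θ_{i−1}*)(θ_0 − θ_d) ϑ_i for 1 ≤ i ≤ d. -/
/-- Key bilinear identity for two β-recurrent sequences. -/
lemma stmt4_aux {K : Type*} [Field K] (d : ℕ) (β : K) (E G : ℕ → K)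
    (hE : ∀ k, k + 2 ≤ d → E (k + 2) = β * E (k + 1) - E k)
    (hG : ∀ k, k + 3 ≤ d → G (k + 3) = β * G (k + 2) - G (k + 1)) :
    ∀ n, n + 1 ≤ d →
      (G (n + 1) + G 1) * (∑ ℓ ∈ Finset.range (n + 1), E ℓ)
        = (∑ j ∈ Finset.range (n + 1), G (j + 1)) * (E n + E 0) := by
  have hY : ∀ n, n + 2 ≤ d →
      (2 - β) * (G 1 * (∑ ℓ ∈ Finset.range (n + 1), E ℓ)
        - (∑ j ∈ Finset.range (n + 1), G (j + 1)) * E 0)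
      + (G 1 - G (n + 1)) * E (n + 1) + (G (n + 2) - G 1) * E n
      - (G (n + 2) - G (n + 1)) * E 0 = 0 := by
    intro n
    induction n with
    | zero =>
      intro h
      norm_num [Finset.sum_range_one]
    | succ p ih =>
      intro h
      have hY' := ih (by omega)
      have h1 := hE p (by omega)
      have h2 := hG p (by omega)
      simp only [Finset.sum_range_succ] at hY' ⊢
      simp only [show p + 1 + 1 = p + 2 from by omega, show p + 1 + 2 = p + 3 from by omega]
      rw [h1, h2]
      linear_combination hY'
  intro n
  induction n using Nat.twoStepInduction with
  | zero =>
    intro h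
    norm_num [Finset.sum_range_one]
    ring
  | one =>
    intro h
    norm_num [Finset.sum_range_succ, Finset.sum_range_one]
    ring
  | more p ihp ihp1 =>
    intro h
    have hP0 := ihp (by omega)
    have hP1 := ihp1 (by omega)
    have hYp := hY (p + 1) (by omega)
    have h1 := hE p (by omega)
    have h2 := hG p (by omega)
    simp only [Finset.sum_range_succ] at hP0 hP1 hYp ⊢
    simp only [show p + 1 + 1 = p + 2 from by omega, show p + 1 + 2 = p + 3 from by omega,
      show p + 2 + 1 = p + 3 from by omega] at hP0 hP1 hYp ⊢
    rw [h1, h2] at hYp ⊢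
    linear_combination β * hP1 - hP0 + hYp

/-- For a parameter array `({θ_i}; {θ_i*}; {φ_i}; {ϕ_i})` satisfying PA1–PA5, with
`ϑ_i = ∑_{ℓ<i} (θ_ℓ − θ_{d−ℓ})/(θ_0 − θ_d)`, one has
`φ_i − ϕ_i = (θ_i* − θ_{i−1}*)(θ_0 − θ_d) ϑ_i` for `1 ≤ i ≤ d`. -/
theorem stmt_4 {K : Type*} [Field K] (d : ℕ) (hd : 1 ≤ d)
    (θ θs φ ϕ : ℕ → K)
    (PA1 : ∀ i, 1 ≤ i → i ≤ d → φ i ≠ 0 ∧ ϕ i ≠ 0)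
    (PA2 : Set.InjOn θ (Set.Iic d) ∧ Set.InjOn θs (Set.Iic d))
    (PA3 : ∀ i, 1 ≤ i → i ≤ d →
      φ i = ϕ 1 * (∑ ℓ ∈ Finset.range i, (θ ℓ - θ (d - ℓ)) / (θ 0 - θ d)) +
        (θs i - θs 0) * (θ (i - 1) - θ d))
    (PA4 : ∀ i, 1 ≤ i → i ≤ d →
      ϕ i = φ 1 * (∑ ℓ ∈ Finset.range i, (θ ℓ - θ (d - ℓ)) / (θ 0 - θ d)) +
        (θs i - θs 0) * (θ (d - i + 1) - θ 0))
    (PA5 : ∃ β : K, ∀ i, 2 ≤ i → i ≤ d - 1 →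
      θ (i - 2) - θ (i + 1) = (β + 1) * (θ (i - 1) - θ i) ∧
      θs (i - 2) - θs (i + 1) = (β + 1) * (θs (i - 1) - θs i)) :
    ∀ i, 1 ≤ i → i ≤ d →
      φ i - ϕ i = (θs i - θs (i - 1)) * (θ 0 - θ d) *
        (∑ ℓ ∈ Finset.range i, (θ ℓ - θ (d - ℓ)) / (θ 0 - θ d)) := by
  obtain ⟨β, hβ⟩ := PA5
  have hne : θ 0 - θ d ≠ 0 := by
    refine sub_ne_zero.mpr fun h => ?_
    have := PA2.1 (Set.mem_Iic.mpr (Nat.zero_le d)) (Set.mem_Iic.mpr le_rfl) h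
    omega
  -- constancy of θ_{j+2} - β θ_{j+1} + θ_j
  have hT : ∀ j, j + 2 ≤ d → θ (j + 2) - β * θ (j + 1) + θ j = θ 2 - β * θ 1 + θ 0 := by
    intro j
    induction j with
    | zero => intro h; norm_num
    | succ p ih =>
      intro h
      have h1 := (hβ (p + 2) (by omega) (by omega)).1
      simp only [show p + 2 - 2 = p from by omega, show p + 2 - 1 = p + 1 from by omega] at h1
      have h2 := ih (by omega)
      linear_combination h2 - h1
  -- homogeneous recurrence for E ℓ = θ ℓ - θ (d - ℓ)
  have hE : ∀ k, k + 2 ≤ d →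
      θ (k + 2) - θ (d - (k + 2)) = β * (θ (k + 1) - θ (d - (k + 1))) - (θ k - θ (d - k)) := by
    intro k hk
    have h1 := hT k hk
    have h2 := hT (d - k - 2) (by omega)
    simp only [show d - k - 2 + 2 = d - k from by omega,
      show d - k - 2 + 1 = d - k - 1 from by omega] at h2
    simp only [show d - (k + 2) = d - k - 2 from by omega,
      show d - (k + 1) = d - k - 1 from by omega]
    linear_combination h1 - h2
  -- recurrence for G j = θs j - θs (j-1)
  have hG : ∀ k, k + 3 ≤ d →
      θs (k + 3) - θs (k + 3 - 1) = β * (θs (k + 2) - θs (k + 2 - 1))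
        - (θs (k + 1) - θs (k + 1 - 1)) := by
    intro k hk
    have h1 := (hβ (k + 2) (by omega) (by omega)).2
    simp only [show k + 2 - 2 = k from by omega, show k + 2 - 1 = k + 1 from by omega] at h1
    simp only [show k + 3 - 1 = k + 2 from by omega, show k + 2 - 1 = k + 1 from by omega,
      show k + 1 - 1 = k from by omega]
    linear_combination -h1
  intro i hi1 hid
  obtain ⟨n, rfl⟩ : ∃ n, i = n + 1 := ⟨i - 1, by omega⟩
  have key := stmt4_aux d β (fun ℓ => θ ℓ - θ (d - ℓ)) (fun j => θs j - θs (j - 1))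
    (fun k hk => hE k hk) (fun k hk => hG k hk) n (by omega)
  beta_reduce at key
  have hsum : (∑ j ∈ Finset.range (n + 1), (θs (j + 1) - θs (j + 1 - 1)))
      = θs (n + 1) - θs 0 := by
    simp only [Nat.add_sub_cancel]
    exact Finset.sum_range_sub θs (n + 1)
  rw [hsum] at key
  simp only [Nat.add_sub_cancel, Nat.sub_zero, show n + 1 - 1 = n from by omega,
    show d - (n + 1) + 1 = d - n from by omega] at key ⊢
  have hφ1 : φ 1 - ϕ 1 = (θs 1 - θs 0) * (θ 0 - θ d) := by
    have h := PA3 1 le_rfl hd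
    simp only [Finset.sum_range_one, Nat.sub_zero, div_self hne, mul_one, Nat.sub_self] at h
    linear_combination h
  rw [PA3 (n + 1) (by omega) hid, PA4 (n + 1) (by omega) hid]
  simp only [Nat.add_sub_cancel, show d - (n + 1) + 1 = d - n from by omega]
  rw [← Finset.sum_div]
  set S : K := ∑ ℓ ∈ Finset.range (n + 1), (θ ℓ - θ (d - ℓ)) with hSdef
  field_simp
  linear_combination (θ d - θ 0) * key - S * hφ1
end

section
/- Suppose the eigenvalue sequence has the q-form θ_i = θ_0 + h(1−q^i)(1−s q^{i+1}) q^{−i} with q ≠ 0, q^i ≠ 1 for 1 ≤ i ≤ d, and θ_0 ≠ θ_d. Then ϑ_i = Σ_{ℓ=0}^{i−1}(θ_ℓ − θ_{d−ℓ})/(θ_0 − θ_d) equals (q^i − 1)(q^{d−i+1} − 1)/((q − 1)(q^d − 1)) for 1 ≤ i ≤ d. -/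
/-- q-case: if `θ_i = θ_0 + h(1−q^i)(1−s q^{i+1}) q^{−i}` with `q ≠ 0`, `q^i ≠ 1` for
`1 ≤ i ≤ d` and `θ_0 ≠ θ_d`, then
`ϑ_i = ∑_{ℓ<i} (θ_ℓ − θ_{d−ℓ})/(θ_0 − θ_d) = (q^i − 1)(q^{d−i+1} − 1)/((q − 1)(q^d − 1))`. -/
theorem stmt_6 {K : Type*} [Field K] (d : ℕ) (hd : 1 ≤ d)
    (q h s θ0 : K) (θ : ℕ → K)
    (hq : q ≠ 0) (hq1 : ∀ i, 1 ≤ i → i ≤ d → q ^ i ≠ 1)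
    (hθ : ∀ i ≤ d, θ i = θ0 + h * (1 - q ^ i) * (1 - s * q ^ (i + 1)) * (q ^ i)⁻¹)
    (hdist : θ 0 ≠ θ d) :
    ∀ i, 1 ≤ i → i ≤ d →
      (∑ ℓ ∈ Finset.range i, (θ ℓ - θ (d - ℓ)) / (θ 0 - θ d)) =
        (q ^ i - 1) * (q ^ (d - i + 1) - 1) / ((q - 1) * (q ^ d - 1)) := by
  have hqd : q ^ d - 1 ≠ 0 := sub_ne_zero.mpr (hq1 d hd le_rfl)
  have hqone : q - 1 ≠ 0 := by
    have := hq1 1 le_rfl hd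
    rw [pow_one] at this
    exact sub_ne_zero.mpr this
  have hθd : θ 0 - θ d ≠ 0 := sub_ne_zero.mpr hdist
  have key : ∀ ℓ ≤ d,
      θ ℓ - θ (d - ℓ) = (θ 0 - θ d) * ((q ^ (d - ℓ) - q ^ ℓ) / (q ^ d - 1)) := by
    intro ℓ hℓ
    have h0 := hθ 0 (Nat.zero_le d)
    have hdd := hθ d le_rfl
    have hl := hθ ℓ hℓ
    have hdl := hθ (d - ℓ) (Nat.sub_le d ℓ)
    have e1 : q ^ (d - ℓ) = q ^ d * (q ^ ℓ)⁻¹ := pow_sub₀ q hq hℓ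
    have e2 : q ^ (d - ℓ + 1) = q ^ d * q * (q ^ ℓ)⁻¹ := by
      rw [pow_succ, e1]; ring
    have hpl : q ^ ℓ ≠ 0 := pow_ne_zero _ hq
    have hpd : q ^ d ≠ 0 := pow_ne_zero _ hq
    rw [h0, hdd, hl, hdl, e1, e2, pow_succ, pow_succ]
    field_simp
    ring
  intro i hi1 hid
  induction i with
  | zero => omega
  | succ n ih =>
    rcases Nat.lt_or_ge n 1 with h1 | h1
    · have hn0 : n = 0 := by omega
      subst hn0
      rw [Finset.sum_range_one, key 0 (Nat.zero_le d)]
      have hd1 : d - 1 + 1 = d := by omega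
      rw [Nat.sub_zero, hd1, pow_zero, pow_one]
      field_simp
    · have hnd : n ≤ d := by omega
      set j := d - (n + 1) with hj
      have e1 : d - n = j + 1 := by omega
      have e2 : d - n + 1 = j + 2 := by omega
      rw [Finset.sum_range_succ, ih h1 hnd, key n hnd, e1,
        mul_div_assoc, mul_div_cancel_left₀ _ hθd]
      field_simp
      ring
end

section
/- Suppose θ_i = θ_0 + h(s−1+(1−s+2i)(−1)^i) for 0 ≤ i ≤ d with d even and the θ_i mutually distinct. Then ϑ_i = Σ_{ℓ=0}^{i−1}(θ_ℓ − θ_{d−ℓ})/(θ_0 − θ_d) equals i/d when i is even and (d−i+1)/d when i is odd, for 1 ≤ i ≤ d. -/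
/-- Bannai/Ito-type case, `d` even: if `θ_i = θ_0 + h(s−1+(1−s+2i)(−1)^i)` with the `θ_i`
mutually distinct, `char K ≠ 2` and `d` invertible in `K`, then
`ϑ_i = ∑_{ℓ<i} (θ_ℓ − θ_{d−ℓ})/(θ_0 − θ_d)` equals `i/d` for `i` even and `(d−i+1)/d`
for `i` odd, for `1 ≤ i ≤ d`. -/
theorem stmt_8 {K : Type*} [Field K] (d : ℕ) (hd : 1 ≤ d) (hde : Even d)
    (h s θ0 : K) (θ : ℕ → K)
    (hchar : (2 : K) ≠ 0)
    (hθ : ∀ i ≤ d, θ i = θ0 + h * (s - 1 + (1 - s + 2 * (i : K)) * (-1 : K) ^ i))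
    (hinj : Set.InjOn θ (Set.Iic d))
    (hdK : (d : K) ≠ 0) :
    ∀ i, 1 ≤ i → i ≤ d →
      (∑ ℓ ∈ Finset.range i, (θ ℓ - θ (d - ℓ)) / (θ 0 - θ d)) =
        if Even i then (i : K) / (d : K) else ((d : K) - (i : K) + 1) / (d : K) := by
  have hθ0 : θ 0 = θ0 := by
    rw [hθ 0 (Nat.zero_le d)]; push_cast; ring
  have hθd : θ d = θ0 + 2 * d * h := by
    rw [hθ d le_rfl, Even.neg_one_pow hde]; ring
  have hne : θ 0 ≠ θ d := fun hc => by
    have := hinj (Set.mem_Iic.2 (Nat.zero_le d)) (Set.mem_Iic.2 le_rfl) hc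
    omega
  have hdiff : θ 0 - θ d = -(2 * d * h) := by rw [hθ0, hθd]; ring
  have hh : h ≠ 0 := by
    intro h0
    apply hne
    rw [hθ0, hθd, h0]; ring
  -- parity of (-1)^(d-ℓ)
  have hpow : ∀ ℓ ≤ d, (-1 : K) ^ (d - ℓ) = (-1 : K) ^ ℓ := by
    intro ℓ hle
    have h1 : (-1 : K) ^ (d - ℓ) * (-1 : K) ^ ℓ = 1 := by
      rw [← pow_add, Nat.sub_add_cancel hle, Even.neg_one_pow hde]
    have h2 : (-1 : K) ^ ℓ * (-1 : K) ^ ℓ = 1 := by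
      rw [← pow_add, Even.neg_one_pow ⟨ℓ, rfl⟩]
    calc (-1 : K) ^ (d - ℓ) = (-1 : K) ^ (d - ℓ) * ((-1 : K) ^ ℓ * (-1 : K) ^ ℓ) := by
          rw [h2, mul_one]
      _ = ((-1 : K) ^ (d - ℓ) * (-1 : K) ^ ℓ) * (-1 : K) ^ ℓ := by ring
      _ = (-1 : K) ^ ℓ := by rw [h1, one_mul]
  have hterm : ∀ ℓ ≤ d, (θ ℓ - θ (d - ℓ)) / (θ 0 - θ d)
      = ((d : K) - 2 * ℓ) * (-1 : K) ^ ℓ / d := by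
    intro ℓ hle
    have hcast : ((d - ℓ : ℕ) : K) = (d : K) - ℓ := by
      push_cast [Nat.cast_sub hle]; ring
    rw [hθ ℓ hle, hθ (d - ℓ) (Nat.sub_le d ℓ), hpow ℓ hle, hdiff, hcast]
    field_simp
    ring
  intro i hi1 hid
  have key : ∀ i ≤ d, (∑ ℓ ∈ Finset.range i, (θ ℓ - θ (d - ℓ)) / (θ 0 - θ d)) =
      if Even i then (i : K) / (d : K) else ((d : K) - (i : K) + 1) / (d : K) := by
    intro i
    induction i with
    | zero => simp
    | succ n ih =>
      intro hle
      rw [Finset.sum_range_succ, ih (le_of_lt hle), hterm n (le_of_lt hle)]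
      rcases Nat.even_or_odd n with he | ho
      · rw [if_pos he, if_neg (by simp [Nat.even_add_one, he]),
          Even.neg_one_pow he]
        push_cast
        field_simp
        ring
      · rw [if_neg (by simp [Nat.not_even_iff_odd.mpr ho]),
          if_pos (by simp [Nat.even_add_one, Nat.not_even_iff_odd.mpr ho]),
          Odd.neg_one_pow ho]
        push_cast
        field_simp
        ring
  exact key i hid
end

section
/- Let Φ, Φ' be Leonard systems with diameters d ≥ d', and suppose (·|·): V × V' → K is a nonzero bilinear form that is ρ-balanced with respect to Φ, Φ'. Then the map proj : V → V' defined by (v|v') = ⟨proj v, v'⟩' for all v, v' satisfies proj(E_0 V) = E_0' V'. In particular proj(E_0 V) ≠ 0. -/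
open Matrix

/-- A Leonard system of diameter `d` over a field `K`, realized in the matrix algebra
`Mat_{d+1}(K)`.  The idempotent sequences are indexed by `ℕ` with the convention
`E i = 0` for `i > d` (as in the paper). -/
structure LeonardSystem (K : Type*) [Field K] (d : ℕ) where
  A : Matrix (Fin (d+1)) (Fin (d+1)) K
  Astar : Matrix (Fin (d+1)) (Fin (d+1)) K
  E : ℕ → Matrix (Fin (d+1)) (Fin (d+1)) K
  Estar : ℕ → Matrix (Fin (d+1)) (Fin (d+1)) K
  theta : ℕ → K
  thetastar : ℕ → K
  theta_inj : Set.InjOn theta (Set.Iic d)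
  thetastar_inj : Set.InjOn thetastar (Set.Iic d)
  E_ne : ∀ i ≤ d, E i ≠ 0
  Estar_ne : ∀ i ≤ d, Estar i ≠ 0
  E_top : ∀ i, d < i → E i = 0
  Estar_top : ∀ i, d < i → Estar i = 0
  AE : ∀ i ≤ d, A * E i = theta i • E i
  AstarEstar : ∀ i ≤ d, Astar * Estar i = thetastar i • Estar i
  EE : ∀ i j, E i * E j = if i = j then E i else 0
  EstarEstar : ∀ i j, Estar i * Estar j = if i = j then Estar i else 0
  sumE : ∑ i ∈ Finset.range (d+1), E i = 1
  sumEstar : ∑ i ∈ Finset.range (d+1), Estar i = 1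
  trid_far : ∀ i j, i ≤ d → j ≤ d → (i + 1 < j ∨ j + 1 < i) → Estar i * A * Estar j = 0
  trid_near : ∀ i j, i ≤ d → j ≤ d → (i + 1 = j ∨ j + 1 = i) → Estar i * A * Estar j ≠ 0
  dtrid_far : ∀ i j, i ≤ d → j ≤ d → (i + 1 < j ∨ j + 1 < i) → E i * Astar * E j = 0
  dtrid_near : ∀ i j, i ≤ d → j ≤ d → (i + 1 = j ∨ j + 1 = i) → E i * Astar * E j ≠ 0

/-- A bilinear form `B : V × V' → K` is `ρ`-balanced with respect to Leonard systems
`Φ`, `Φ'` (of diameters `d ≥ d'`) if it is nonzero and satisfies (B1), (B2). -/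
def IsBalancedForm {K : Type*} [Field K] {d d' : ℕ} (Φ : LeonardSystem K d) (Φ' : LeonardSystem K d')
    (ρ : ℕ) (B : (Fin (d+1) → K) →ₗ[K] (Fin (d'+1) → K) →ₗ[K] K) : Prop :=
  B ≠ 0 ∧
  (∀ i j, i ≤ d → j ≤ d' → i ≠ j + ρ →
    ∀ v v', B (Φ.Estar i *ᵥ v) (Φ'.Estar j *ᵥ v') = 0) ∧
  (∀ i j, i ≤ d → j ≤ d' → (i < j ∨ j + (d - d') < i) →
    ∀ v v', B (Φ.E i *ᵥ v) (Φ'.E j *ᵥ v') = 0)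

namespace LSAux

variable {K : Type*} [Field K] {d : ℕ}

lemma sum_mulVec {n : ℕ} (s : Finset ℕ) (M : ℕ → Matrix (Fin n) (Fin n) K) (v : Fin n → K) :
    (∑ i ∈ s, M i) *ᵥ v = ∑ i ∈ s, M i *ᵥ v := by
  induction s using Finset.induction with
  | empty => simp
  | insert _ _ h ih => simp [Finset.sum_insert h, Matrix.add_mulVec, ih]

lemma finrank_range_add {n : ℕ} (P Q : Matrix (Fin n) (Fin n) K)
    (hPP : P * P = P) (hQQ : Q * Q = Q) (hPQ : P * Q = 0) (hQP : Q * P = 0) :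
    Module.finrank K (LinearMap.range (P + Q).mulVecLin) =
      Module.finrank K (LinearMap.range P.mulVecLin) +
        Module.finrank K (LinearMap.range Q.mulVecLin) := by
  have hsup : LinearMap.range (P + Q).mulVecLin
      = LinearMap.range P.mulVecLin ⊔ LinearMap.range Q.mulVecLin := by
    apply le_antisymm
    · rintro _ ⟨v, rfl⟩
      rw [mulVecLin_apply, add_mulVec]
      exact Submodule.add_mem_sup ⟨v, rfl⟩ ⟨v, rfl⟩
    · rw [sup_le_iff]
      constructor
      · rintro _ ⟨v, rfl⟩
        refine ⟨P *ᵥ v, ?_⟩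
        rw [mulVecLin_apply, mulVecLin_apply, add_mulVec, mulVec_mulVec, mulVec_mulVec,
          hPP, hQP, zero_mulVec, add_zero]
      · rintro _ ⟨v, rfl⟩
        refine ⟨Q *ᵥ v, ?_⟩
        rw [mulVecLin_apply, mulVecLin_apply, add_mulVec, mulVec_mulVec, mulVec_mulVec,
          hQQ, hPQ, zero_mulVec, zero_add]
  have hinf : LinearMap.range P.mulVecLin ⊓ LinearMap.range Q.mulVecLin = ⊥ := by
    rw [Submodule.eq_bot_iff]
    rintro x ⟨⟨u, hu⟩, ⟨w, hw⟩⟩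
    have h1 : P *ᵥ x = x := by
      rw [← hu, mulVecLin_apply, mulVec_mulVec, hPP]
    have h2 : P *ᵥ x = 0 := by
      rw [← hw, mulVecLin_apply, mulVec_mulVec, hPQ, zero_mulVec]
    rw [← h1, h2]
  rw [hsup, ← Submodule.finrank_sup_add_finrank_inf_eq, hinf]
  simp

lemma mulVecLin_ne_zero {n : ℕ} {M : Matrix (Fin n) (Fin n) K} (hM : M ≠ 0) :
    LinearMap.range M.mulVecLin ≠ ⊥ := by
  intro h
  apply hM
  ext i j
  have : M.mulVecLin (Pi.single j 1) ∈ (⊥ : Submodule K (Fin n → K)) := h ▸ LinearMap.mem_range_self _ _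
  rw [Submodule.mem_bot, mulVecLin_apply, mulVec_single] at this
  have := congrFun this i
  simpa using this

lemma rank_E_one (Φ : LeonardSystem K d) :
    ∀ i ≤ d, Module.finrank K (LinearMap.range (Φ.E i).mulVecLin) = 1 := by
  classical
  have hsum : ∀ S : Finset ℕ,
      Module.finrank K (LinearMap.range (∑ i ∈ S, Φ.E i).mulVecLin)
        = ∑ i ∈ S, Module.finrank K (LinearMap.range (Φ.E i).mulVecLin) := by
    intro S
    induction S using Finset.induction with
    | empty =>
      rw [Finset.sum_empty, Finset.sum_empty]
      exact (congrArg (fun f => Module.finrank K (LinearMap.range f)) Matrix.mulVecLin_zero).trans (by simp)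
    | @insert i S hi ih =>
      rw [Finset.sum_insert hi, Finset.sum_insert hi, ← ih]
      apply finrank_range_add
      · rw [Φ.EE]; simp
      · have hrow : ∀ j ∈ S, Φ.E j * (∑ k ∈ S, Φ.E k) = Φ.E j := by
          intro j hj
          rw [Finset.mul_sum]
          simp [Φ.EE, Finset.sum_ite_eq, hj]
        rw [Finset.sum_mul, Finset.sum_congr rfl hrow]
      · rw [Finset.mul_sum]
        apply Finset.sum_eq_zero
        intro j hj
        rw [Φ.EE, if_neg (by rintro rfl; exact hi hj)]
      · rw [Finset.sum_mul]
        apply Finset.sum_eq_zero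
        intro j hj
        rw [Φ.EE, if_neg (by rintro rfl; exact hi hj)]
  have htot : ∑ i ∈ Finset.range (d+1),
      Module.finrank K (LinearMap.range (Φ.E i).mulVecLin) = d + 1 := by
    rw [← hsum, Φ.sumE, mulVecLin_one, LinearMap.range_id]
    simpa using Module.finrank_fin_fun (n := d+1) (K := K)
  have hge : ∀ i ∈ Finset.range (d+1),
      1 ≤ Module.finrank K (LinearMap.range (Φ.E i).mulVecLin) := by
    intro i hi
    rw [Nat.one_le_iff_ne_zero, Ne, Submodule.finrank_eq_zero]
    exact mulVecLin_ne_zero (Φ.E_ne i (by simpa [Nat.lt_succ_iff] using hi))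
  intro i hi
  by_contra hne
  have h2 : 2 ≤ Module.finrank K (LinearMap.range (Φ.E i).mulVecLin) := by
    have := hge i (Finset.mem_range.mpr (by omega))
    omega
  have : (d+1 : ℕ) < d + 1 := by
    calc (d+1 : ℕ) = ∑ _j ∈ Finset.range (d+1), 1 := by simp
    _ < ∑ j ∈ Finset.range (d+1),
          Module.finrank K (LinearMap.range (Φ.E j).mulVecLin) := by
        apply Finset.sum_lt_sum hge
        exact ⟨i, Finset.mem_range.mpr (by omega), by omega⟩
    _ = d + 1 := htot
  omega

lemma pow_mul_E (Φ : LeonardSystem K d) (i : ℕ) (hi : i ≤ d) :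
    ∀ n : ℕ, Φ.A ^ n * Φ.E i = (Φ.theta i) ^ n • Φ.E i := by
  intro n
  induction n with
  | zero => simp
  | succ n ih =>
    rw [pow_succ, mul_assoc, Φ.AE i hi, mul_smul_comm, ih, smul_smul, mul_comm, ← pow_succ]

lemma aeval_mul_E (Φ : LeonardSystem K d) (p : Polynomial K) (i : ℕ) (hi : i ≤ d) :
    (Polynomial.aeval Φ.A p) * Φ.E i = (p.eval (Φ.theta i)) • Φ.E i := by
  induction p using Polynomial.induction_on' with
  | add p q hp hq => rw [map_add, add_mul, hp, hq, Polynomial.eval_add, add_smul]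
  | monomial n a =>
    rw [Polynomial.aeval_monomial, Polynomial.eval_monomial, mul_assoc,
      pow_mul_E Φ i hi, Algebra.algebraMap_eq_smul_one, smul_mul_assoc, one_mul,
      smul_smul]

lemma E_mem_adjoin (Φ : LeonardSystem K d) (j : ℕ) (hj : j ≤ d) :
    Φ.E j ∈ Algebra.adjoin K {Φ.A} := by
  classical
  have hinj : Set.InjOn Φ.theta ↑(Finset.range (d+1)) := by
    apply Φ.theta_inj.mono
    intro x hx
    simp only [Finset.coe_range, Set.mem_Iio] at hx
    exact Set.mem_Iic.mpr (by omega)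
  have key : Polynomial.aeval Φ.A (Lagrange.basis (Finset.range (d+1)) Φ.theta j) = Φ.E j := by
    have h1 : Polynomial.aeval Φ.A (Lagrange.basis (Finset.range (d+1)) Φ.theta j)
        = ∑ i ∈ Finset.range (d+1),
            (Polynomial.aeval Φ.A (Lagrange.basis (Finset.range (d+1)) Φ.theta j)) * Φ.E i := by
      rw [← Finset.mul_sum, Φ.sumE, mul_one]
    rw [h1, Finset.sum_eq_single j]
    · rw [aeval_mul_E Φ _ j hj, Lagrange.eval_basis_self hinj (Finset.mem_range.mpr (by omega)),
        one_smul]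
    · intro k hk hkj
      rw [aeval_mul_E Φ _ k (by simpa [Nat.lt_succ_iff] using hk),
        Lagrange.eval_basis_of_ne (Ne.symm hkj) hk, zero_smul]
    · intro h
      exact absurd (Finset.mem_range.mpr (by omega)) h
  rw [← key]
  exact Polynomial.aeval_mem_adjoin_singleton K _

end LSAux

/-- If `(·|·) : V × V' → K` is `ρ`-balanced with respect to `Φ, Φ'` and `proj : V → V'` is
defined by `(v|v') = ⟨proj v, v'⟩'` (where `⟨·,·⟩'` is the invariant nondegenerate form on
`V'`), then `proj(E_0 V) = E_0' V'`; in particular `proj(E_0 V) ≠ 0`. -/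
theorem stmt_10 {K : Type*} [Field K] {d d' ρ : ℕ} (hdd : d' ≤ d) (hρ : ρ ≤ d - d')
    (Φ : LeonardSystem K d) (Φ' : LeonardSystem K d')
    (B : (Fin (d+1) → K) →ₗ[K] (Fin (d'+1) → K) →ₗ[K] K)
    (hB : IsBalancedForm Φ Φ' ρ B)
    (Bp : (Fin (d'+1) → K) →ₗ[K] (Fin (d'+1) → K) →ₗ[K] K)
    (hnd₁ : ∀ v, (∀ u, Bp u v = 0) → v = 0)
    (hnd₂ : ∀ u, (∀ v, Bp u v = 0) → u = 0)
    (hinvA : ∀ X ∈ Algebra.adjoin K {Φ'.A}, ∀ u v, Bp (X *ᵥ u) v = Bp u (X *ᵥ v))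
    (hinvAs : ∀ X ∈ Algebra.adjoin K {Φ'.Astar}, ∀ u v, Bp (X *ᵥ u) v = Bp u (X *ᵥ v))
    (proj : (Fin (d+1) → K) →ₗ[K] (Fin (d'+1) → K))
    (hproj : ∀ v v', B v v' = Bp (proj v) v') :
    Submodule.map proj (LinearMap.range (Φ.E 0).mulVecLin) =
      LinearMap.range (Φ'.E 0).mulVecLin ∧
    Submodule.map proj (LinearMap.range (Φ.E 0).mulVecLin) ≠ ⊥ := by
  classical
  obtain ⟨hB0, hB1, hB2⟩ := hB
  have decE : ∀ v : Fin (d+1) → K, ∑ i ∈ Finset.range (d+1), Φ.E i *ᵥ v = v := by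
    intro v; rw [← LSAux.sum_mulVec, Φ.sumE, one_mulVec]
  have decEs : ∀ v : Fin (d+1) → K, ∑ i ∈ Finset.range (d+1), Φ.Estar i *ᵥ v = v := by
    intro v; rw [← LSAux.sum_mulVec, Φ.sumEstar, one_mulVec]
  have decE' : ∀ v : Fin (d'+1) → K, ∑ i ∈ Finset.range (d'+1), Φ'.E i *ᵥ v = v := by
    intro v; rw [← LSAux.sum_mulVec, Φ'.sumE, one_mulVec]
  have decEs' : ∀ v : Fin (d'+1) → K, ∑ i ∈ Finset.range (d'+1), Φ'.Estar i *ᵥ v = v := by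
    intro v; rw [← LSAux.sum_mulVec, Φ'.sumEstar, one_mulVec]
  have hranks := LSAux.rank_E_one Φ
  have hranks' := LSAux.rank_E_one Φ'
  -- Part A: inclusion
  have hle : Submodule.map proj (LinearMap.range (Φ.E 0).mulVecLin)
      ≤ LinearMap.range (Φ'.E 0).mulVecLin := by
    intro x hx
    rw [Submodule.mem_map] at hx
    obtain ⟨y, hy, rfl⟩ := hx
    obtain ⟨v, rfl⟩ := hy
    set w := proj ((Φ.E 0).mulVecLin v) with hw
    have hj0 : ∀ j ∈ Finset.range (d'+1), j ≠ 0 → Φ'.E j *ᵥ w = 0 := by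
      intro j hj hjne
      apply hnd₂
      intro u
      have h1 : Bp (Φ'.E j *ᵥ w) u = Bp w (Φ'.E j *ᵥ u) :=
        hinvA _ (LSAux.E_mem_adjoin Φ' j (by simpa [Nat.lt_succ_iff] using hj)) w u
      rw [h1, hw, ← hproj]
      simp only [mulVecLin_apply]
      exact hB2 0 j (Nat.zero_le d) (by simpa [Nat.lt_succ_iff] using hj)
        (Or.inl (by omega)) v u
    have hsum : (∑ j ∈ Finset.range (d'+1), Φ'.E j *ᵥ w) = Φ'.E 0 *ᵥ w :=
      Finset.sum_eq_single 0 hj0 (fun h => absurd (Finset.mem_range.mpr (by omega)) h)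
    refine ⟨w, ?_⟩
    rw [mulVecLin_apply, ← hsum, decE' w]
  -- Part B: nonvanishing
  have hne : Submodule.map proj (LinearMap.range (Φ.E 0).mulVecLin) ≠ ⊥ := by
    intro hbot
    have hzero : ∀ v : Fin (d+1) → K, proj (Φ.E 0 *ᵥ v) = 0 := by
      intro v
      have hmem : proj (Φ.E 0 *ᵥ v)
          ∈ Submodule.map proj (LinearMap.range (Φ.E 0).mulVecLin) :=
        Submodule.mem_map_of_mem ⟨v, by rw [mulVecLin_apply]⟩
      rw [hbot] at hmem
      exact (Submodule.mem_bot K).mp hmem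
    set U : Submodule K (Fin (d+1) → K) := LinearMap.ker B with hUdef
    have hmemU : ∀ v, v ∈ U ↔ ∀ v', B v v' = 0 := by
      intro v
      rw [hUdef, LinearMap.mem_ker]
      constructor
      · intro h v'; rw [h]; rfl
      · intro h; exact LinearMap.ext h
    have hE0U : ∀ v, Φ.E 0 *ᵥ v ∈ U := by
      intro v
      rw [hmemU]
      intro v'
      rw [hproj, hzero]
      simp
    have hEstarU : ∀ v ∈ U, ∀ i, Φ.Estar i *ᵥ v ∈ U := by
      intro v hv i
      by_cases hi : i ≤ d
      swap
      · rw [Φ.Estar_top i (by omega), zero_mulVec]; exact U.zero_mem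
      rw [hmemU]
      intro w'
      have hdecw : B (Φ.Estar i *ᵥ v) w'
          = ∑ j ∈ Finset.range (d'+1), B (Φ.Estar i *ᵥ v) (Φ'.Estar j *ᵥ w') := by
        conv_lhs => rw [← decEs' w']
        rw [map_sum]
      rw [hdecw]
      apply Finset.sum_eq_zero
      intro j hj
      have hjd : j ≤ d' := by simpa [Nat.lt_succ_iff] using hj
      by_cases hij : i = j + ρ
      · subst hij
        have h0 : B v (Φ'.Estar j *ᵥ w') = 0 := (hmemU v).mp hv _
        have hdec : B v (Φ'.Estar j *ᵥ w')
            = ∑ k ∈ Finset.range (d+1), B (Φ.Estar k *ᵥ v) (Φ'.Estar j *ᵥ w') := by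
          conv_lhs => rw [← decEs v]
          rw [map_sum, LinearMap.sum_apply]
        rw [hdec, Finset.sum_eq_single (j + ρ)] at h0
        · exact h0
        · intro k hk hkne
          exact hB1 k j (by simpa [Nat.lt_succ_iff] using hk) hjd hkne v w'
        · intro h; exact absurd (Finset.mem_range.mpr (by omega)) h
      · exact hB1 i j hi hjd hij v w'
    have hAstarU : ∀ v ∈ U, Φ.Astar *ᵥ v ∈ U := by
      intro v hv
      have hA : Φ.Astar *ᵥ v
          = ∑ i ∈ Finset.range (d+1), Φ.thetastar i • (Φ.Estar i *ᵥ v) := by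
        conv_lhs => rw [← decEs v, ← mulVecLin_apply]
        rw [map_sum]
        apply Finset.sum_congr rfl
        intro i hi
        rw [mulVecLin_apply, mulVec_mulVec,
          Φ.AstarEstar i (by simpa [Nat.lt_succ_iff] using hi), smul_mulVec]
      rw [hA]
      exact Submodule.sum_mem U (fun i _ => Submodule.smul_mem U _ (hEstarU v hv i))
    have hEkU : ∀ k, k ≤ d → ∀ v, Φ.E k *ᵥ v ∈ U := by
      intro k
      induction k using Nat.strong_induction_on with
      | _ k ih =>
        intro hk v
        rcases Nat.eq_zero_or_pos k with rfl | hpos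
        · exact hE0U v
        obtain ⟨m, rfl⟩ : ∃ m, k = m + 1 := ⟨k - 1, by omega⟩
        have hMU : ∀ u, (Φ.E (m+1) * Φ.Astar * Φ.E m) *ᵥ u ∈ U := by
          intro u
          have hx : Φ.Astar *ᵥ (Φ.E m *ᵥ u) ∈ U :=
            hAstarU _ (ih m (by omega) (by omega) u)
          set x := Φ.Astar *ᵥ (Φ.E m *ᵥ u) with hxdef
          have hsplit : Φ.E (m+1) *ᵥ x
              = x - ∑ j ∈ (Finset.range (d+1)).erase (m+1), Φ.E j *ᵥ x := by
            have hd := decE x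
            rw [← Finset.sum_erase_add _ _ (show m+1 ∈ Finset.range (d+1) from Finset.mem_range.mpr (by omega))] at hd
            rw [eq_sub_iff_add_eq]
            exact (add_comm _ _).trans hd
          have hgoal : Φ.E (m+1) *ᵥ x ∈ U := by
            rw [hsplit]
            apply Submodule.sub_mem U hx
            apply Submodule.sum_mem
            intro j hj
            obtain ⟨hjne, hjr⟩ := Finset.mem_erase.mp hj
            have hjd : j ≤ d := by simpa [Nat.lt_succ_iff] using hjr
            rcases lt_or_gt_of_ne hjne with hlt | hgt
            · exact ih j (by omega) hjd x
            · rw [hxdef, mulVec_mulVec, mulVec_mulVec,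
                Φ.dtrid_far j m hjd (by omega) (Or.inr (by omega)), zero_mulVec]
              exact U.zero_mem
          have hrw : (Φ.E (m+1) * Φ.Astar * Φ.E m) *ᵥ u = Φ.E (m+1) *ᵥ x := by
            rw [hxdef, mulVec_mulVec, mulVec_mulVec, mul_assoc]
          rw [hrw]
          exact hgoal
        have hMne : (Φ.E (m+1) * Φ.Astar * Φ.E m) ≠ 0 :=
          Φ.dtrid_near (m+1) m (by omega) (by omega) (Or.inr rfl)
        have hrange : LinearMap.range (Φ.E (m+1) * Φ.Astar * Φ.E m).mulVecLin
            = LinearMap.range (Φ.E (m+1)).mulVecLin := by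
          apply Submodule.eq_of_le_of_finrank_le
          · rintro _ ⟨u, rfl⟩
            refine ⟨(Φ.Astar * Φ.E m) *ᵥ u, ?_⟩
            rw [mulVecLin_apply, mulVecLin_apply, mulVec_mulVec, mul_assoc]
          · rw [hranks (m+1) (by omega), Nat.one_le_iff_ne_zero, Ne,
              Submodule.finrank_eq_zero]
            exact LSAux.mulVecLin_ne_zero hMne
        have hmem : Φ.E (m+1) *ᵥ v ∈ LinearMap.range (Φ.E (m+1)).mulVecLin :=
          ⟨v, by rw [mulVecLin_apply]⟩
        rw [← hrange] at hmem
        obtain ⟨u, hu⟩ := hmem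
        rw [← hu, mulVecLin_apply]
        exact hMU u
    have hUtop : ∀ v, v ∈ U := by
      intro v
      rw [← decE v]
      exact Submodule.sum_mem U
        (fun k hk => hEkU k (by simpa [Nat.lt_succ_iff] using hk) v)
    refine hB0 (LinearMap.ext fun v => LinearMap.ext fun v' => ?_)
    simpa using (hmemU v).mp (hUtop v) v'
  refine ⟨?_, hne⟩
  apply Submodule.eq_of_le_of_finrank_le hle
  rw [hranks' 0 (Nat.zero_le d'), Nat.one_le_iff_ne_zero, Ne, Submodule.finrank_eq_zero]
  exact hne
end

section
/- Let (·|·): V × V' → K be ρ-balanced with respect to Leonard systems Φ, Φ', and let σ : D* → D*' be the surjective algebra homomorphism determined by E_i*^σ = E_{i−ρ}*'. Then there exist scalars ξ*, ζ* ∈ K such that A*' = ξ* A*^σ + ζ* I'. Equivalently, θ_i*' = ξ* θ_{ρ+i}* + ζ* for 0 ≤ i ≤ d'. -/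
open Matrix

section Helpers

variable {K : Type*} [Field K]

lemma LB_sdb_transpose {a b : ℕ} (i : Fin a) (j : Fin b) (c : K) :
    (Matrix.single i j c)ᵀ = Matrix.single j i c := by
  ext r s; simp [Matrix.single, and_comm]

lemma LB_conj_eq_zero_iff {a b : ℕ} (P Pi : Matrix (Fin a) (Fin a) K)
    (R Ri : Matrix (Fin b) (Fin b) K)
    (hPi : Pi * P = 1) (hRi : R * Ri = 1) (U : Matrix (Fin a) (Fin b) K) :
    P * U * R = 0 ↔ U = 0 := by
  constructor
  · intro h
    calc U = (Pi * P) * U * (R * Ri) := by rw [hPi, hRi, Matrix.one_mul, Matrix.mul_one]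
      _ = Pi * (P * U * R) * Ri := by simp only [Matrix.mul_assoc]
      _ = 0 := by rw [h, Matrix.mul_zero, Matrix.zero_mul]
  · intro h; rw [h, Matrix.mul_zero, Matrix.zero_mul]

lemma LB_sdb_sandwich {a b : ℕ} (W : Matrix (Fin a) (Fin b) K) (i : Fin a) (j : Fin b) :
    Matrix.single i i (1:K) * W * Matrix.single j j (1:K) = W i j • Matrix.single i j (1:K) := by
  ext r s
  simp only [Matrix.mul_apply, Matrix.smul_apply, Matrix.single, Matrix.of_apply,
    smul_eq_mul, ite_and]
  by_cases hir : i = r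
  · by_cases hjs : j = s
    · subst hir; subst hjs
      simp [Finset.sum_ite_eq, Finset.sum_ite_eq']
    · subst hir
      simp [hjs, Finset.sum_ite_eq, Finset.sum_ite_eq']
  · simp [hir, Finset.sum_ite_eq, Finset.sum_ite_eq']

lemma LB_smul_sdb_eq_zero_iff {a b : ℕ} (c : K) (i : Fin a) (j : Fin b) :
    c • Matrix.single i j (1:K) = 0 ↔ c = 0 := by
  constructor
  · intro h
    have := congrArg (fun M => M i j) h
    simpa [Matrix.single] using this
  · rintro rfl; simp

/-- main block-entry dictionary -/
lemma LB_block_zero_iff {a b : ℕ}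
    (Q Qi : Matrix (Fin a) (Fin a) K) (Q' Qi' : Matrix (Fin b) (Fin b) K)
    (h2 : Qi * Q = 1) (h4 : Qi' * Q' = 1)
    (X : Matrix (Fin a) (Fin a) K) (Y : Matrix (Fin b) (Fin b) K) (Z : Matrix (Fin a) (Fin b) K)
    (i : Fin a) (j : Fin b)
    (hX : X = Q * Matrix.single i i 1 * Qi) (hY : Y = Q' * Matrix.single j j 1 * Qi') :
    X * Z * Y = 0 ↔ (Qi * Z * Q') i j = 0 := by
  have key : X * Z * Y = Q * (((Qi * Z * Q') i j) • Matrix.single i j (1:K)) * Qi' := by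
    rw [hX, hY, ← LB_sdb_sandwich]
    simp only [Matrix.mul_assoc]
  rw [key, LB_conj_eq_zero_iff Q Qi Qi' Q' h2 h4, LB_smul_sdb_eq_zero_iff]

/-- scalarization of an idempotent resolution -/
lemma LB_exists_basis {n : ℕ} (E : ℕ → Matrix (Fin (n+1)) (Fin (n+1)) K)
    (hne : ∀ i ≤ n, E i ≠ 0) (hEE : ∀ i j, E i * E j = if i = j then E i else 0) :
    ∃ Q Qinv : Matrix (Fin (n+1)) (Fin (n+1)) K, Q * Qinv = 1 ∧ Qinv * Q = 1 ∧
      ∀ i : Fin (n+1), E (i:ℕ) = Q * Matrix.single i i 1 * Qinv := by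
  classical
  have hex : ∀ i : Fin (n+1), ∃ a b : Fin (n+1), E (i:ℕ) a b ≠ 0 := by
    intro i
    by_contra h
    push_neg at h
    exact hne i (Nat.lt_succ_iff.mp i.isLt) (Matrix.ext fun a b => by simpa using h a b)
  choose av bv hab using hex
  set x : Fin (n+1) → (Fin (n+1) → K) := fun i r => E (i:ℕ) r (bv i) with hx
  have hmul : ∀ i j : Fin (n+1), (E (j:ℕ)) *ᵥ (x i) = if i = j then x i else 0 := by
    intro i j
    funext r
    have : ((E (j:ℕ)) *ᵥ (x i)) r = (E (j:ℕ) * E (i:ℕ)) r (bv i) := by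
      simp [Matrix.mulVec, Matrix.mul_apply, dotProduct, hx]
    rw [this, hEE]
    by_cases h : i = j
    · subst h; simp [hx]
    · have : ¬((j:ℕ) = (i:ℕ)) := fun hc => h (Fin.ext hc).symm
      simp [this, h, hx]
  have hxne : ∀ i, x i ≠ 0 := by
    intro i h
    exact hab i (by simpa [hx] using congrFun h (av i))
  set Q : Matrix (Fin (n+1)) (Fin (n+1)) K := Matrix.of (fun r i => x i r) with hQ
  have hQv : ∀ v, Q *ᵥ v = ∑ i, v i • x i := by
    intro v
    funext r
    simp [hQ, Matrix.mulVec, dotProduct, Finset.sum_apply, mul_comm]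
  have hinj : ∀ v, Q *ᵥ v = 0 → v = 0 := by
    intro v hv
    funext j
    have h1 : (E (j:ℕ)) *ᵥ (Q *ᵥ v) = v j • x j := by
      rw [hQv, ← Matrix.mulVecLin_apply, map_sum]
      simp only [_root_.map_smul, Matrix.mulVecLin_apply, hmul]
      simp [smul_ite, Finset.sum_ite_eq, Finset.sum_ite_eq']
    have h2 : v j • x j = 0 := by rw [← h1, hv, Matrix.mulVec_zero]
    have := (smul_eq_zero.mp h2).resolve_right (hxne j)
    simpa using this
  have hdet : IsUnit Q.det := by
    rw [isUnit_iff_ne_zero]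
    intro h0
    obtain ⟨v, hv0, hv⟩ := (Matrix.exists_mulVec_eq_zero_iff).mpr h0
    exact hv0 (hinj v hv)
  refine ⟨Q, Q⁻¹, Matrix.mul_nonsing_inv Q hdet, Matrix.nonsing_inv_mul Q hdet, ?_⟩
  intro i
  have hEQ : E (i:ℕ) * Q = Q * Matrix.single i i 1 := by
    ext r k
    have hl : (E (i:ℕ) * Q) r k = ((E (i:ℕ)) *ᵥ (x k)) r := by
      simp [hQ, Matrix.mul_apply, Matrix.mulVec, dotProduct]
    rw [hl, hmul]
    have hr : ((Q * Matrix.single i i 1 : Matrix (Fin (n+1)) (Fin (n+1)) K)) r k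
        = if i = k then x i r else 0 := by
      simp [hQ, Matrix.mul_apply, Matrix.single, ite_and, Finset.sum_ite_eq]
    rw [hr]
    by_cases h : k = i
    · subst h; simp
    · have h' : ¬ (i = k) := fun hc => h hc.symm
      simp [h, h']
  calc E (i:ℕ) = E (i:ℕ) * Q * Q⁻¹ := by
        rw [Matrix.mul_assoc, Matrix.mul_nonsing_inv Q hdet, Matrix.mul_one]
    _ = Q * Matrix.single i i 1 * Q⁻¹ := by rw [hEQ]

noncomputable def mkM {n n' : ℕ} (B : (Fin n → K) →ₗ[K] (Fin n' → K) →ₗ[K] K) :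
    Matrix (Fin n) (Fin n') K := Matrix.of fun a b => B (Pi.single a 1) (Pi.single b 1)

lemma LB_single_eq_smul {n : ℕ} (v : Fin n → K) (a : Fin n) :
    Pi.single a (v a) = v a • (Pi.single a (1:K) : Fin n → K) := by
  funext j
  by_cases h : j = a
  · subst h; simp
  · simp [Pi.single_apply, h]

lemma LB_B_apply_eq {n n' : ℕ} (B : (Fin n → K) →ₗ[K] (Fin n' → K) →ₗ[K] K) (v : Fin n → K)
    (w : Fin n' → K) :
    B v w = ∑ a, ∑ b, v a * (w b * mkM B a b) := by
  have h1 : B v = ∑ a, B (Pi.single a (v a)) := by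
    conv_lhs => rw [← Finset.univ_sum_single v]
    exact map_sum B _ _
  rw [h1, LinearMap.sum_apply]
  refine Finset.sum_congr rfl fun a _ => ?_
  have h2 : B (Pi.single a (v a)) w = ∑ b, B (Pi.single a (v a)) (Pi.single b (w b)) := by
    conv_lhs => rw [← Finset.univ_sum_single w]
    exact map_sum _ _ _
  rw [h2]
  refine Finset.sum_congr rfl fun b _ => ?_
  rw [LB_single_eq_smul v a, LB_single_eq_smul w b, _root_.map_smul, B.map_smul,
    LinearMap.smul_apply]
  simp only [smul_eq_mul, mkM, Matrix.of_apply]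
  ring

lemma LB_form_matrix_zero {n n' : ℕ} (B : (Fin n → K) →ₗ[K] (Fin n' → K) →ₗ[K] K)
    (X : Matrix (Fin n) (Fin n) K) (Y : Matrix (Fin n') (Fin n') K)
    (h : ∀ v w, B (X *ᵥ v) (Y *ᵥ w) = 0) : Xᵀ * (mkM B) * Y = 0 := by
  ext a b
  have h1 := h (Pi.single a 1) (Pi.single b 1)
  rw [LB_B_apply_eq] at h1
  rw [Matrix.zero_apply, ← h1]
  simp only [Matrix.mul_apply, Matrix.transpose_apply, Matrix.mulVec_single, MulOpposite.op_one, one_smul, Matrix.col_apply, mul_one]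
  rw [Finset.sum_comm]
  refine Finset.sum_congr rfl fun c _ => ?_
  rw [Finset.sum_mul]
  refine Finset.sum_congr rfl fun e _ => ?_
  ring

lemma LB_mkM_ne {n n' : ℕ} (B : (Fin n → K) →ₗ[K] (Fin n' → K) →ₗ[K] K) (hB : B ≠ 0) :
    mkM B ≠ 0 := by
  intro h
  apply hB
  refine LinearMap.ext fun v => LinearMap.ext fun w => ?_
  rw [LB_B_apply_eq]
  simp [h]

lemma LB_Astar_eq {d : ℕ} (Φ : LeonardSystem K d) :
    Φ.Astar = ∑ i ∈ Finset.range (d+1), Φ.thetastar i • Φ.Estar i := by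
  conv_lhs => rw [← Matrix.mul_one Φ.Astar, ← Φ.sumEstar]
  rw [Finset.mul_sum]
  exact Finset.sum_congr rfl fun i hi =>
    Φ.AstarEstar i (Nat.lt_succ_iff.mp (Finset.mem_range.mp hi))

lemma LB_Estar_mul_Astar {d : ℕ} (Φ : LeonardSystem K d) (j : ℕ) (hj : j ≤ d) :
    Φ.Estar j * Φ.Astar = Φ.thetastar j • Φ.Estar j := by
  conv_lhs => rw [LB_Astar_eq Φ, Finset.mul_sum]
  rw [Finset.sum_eq_single_of_mem j (Finset.mem_range.mpr (by omega))]
  · rw [Matrix.mul_smul, Φ.EstarEstar]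
    simp
  · intro i hi hne
    rw [Matrix.mul_smul, Φ.EstarEstar]
    simp [Ne.symm hne]

end Helpers


section Core
variable {K : Type*} [Field K] {d d' f : ℕ}

-- row generation: top corner entry is nonzero
lemma LB_m00 (hf : d = d' + f)
    (T : Matrix (Fin (d+1)) (Fin (d+1)) K) (Sc : Matrix (Fin (d'+1)) (Fin (d'+1)) K)
    (m : Matrix (Fin (d+1)) (Fin (d'+1)) K)
    (hT0 : ∀ i j : Fin (d+1), ((i:ℕ)+1 < (j:ℕ) ∨ (j:ℕ)+1 < (i:ℕ)) → T i j = 0)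
    (hTn : ∀ i j : Fin (d+1), ((i:ℕ)+1 = (j:ℕ) ∨ (j:ℕ)+1 = (i:ℕ)) → T i j ≠ 0)
    (hband : ∀ (i : Fin (d+1)) (j : Fin (d'+1)), ((i:ℕ) < (j:ℕ) ∨ (j:ℕ) + f < (i:ℕ)) → m i j = 0)
    (hm : m ≠ 0) (hR : Tᵀ * m = m * Sc) :
    m ⟨0, Nat.succ_pos d⟩ ⟨0, Nat.succ_pos d'⟩ ≠ 0 := by
  intro h00
  have hrows : ∀ i : ℕ, ∀ (hi : i < d+1) (j : Fin (d'+1)), m ⟨i, hi⟩ j = 0 := by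
    intro i
    induction i using Nat.strong_induction_on with
    | _ i IH =>
      intro hi j
      rcases Nat.eq_zero_or_pos i with rfl | hpos
      · rcases Nat.eq_zero_or_pos (j:ℕ) with hj0 | hjpos
        · have hj : j = ⟨0, Nat.succ_pos d'⟩ := Fin.ext hj0
          rw [hj]; exact h00
        · exact hband _ j (Or.inl (by simpa using hjpos))
      · -- i ≥ 1
        have hi' : i - 1 < d + 1 := by omega
        have hRe := congrArg (fun X => X ⟨i-1, hi'⟩ j) hR
        simp only [Matrix.mul_apply, Matrix.transpose_apply] at hRe
        have hRHS : (∑ k, m ⟨i-1, hi'⟩ k * Sc k j) = 0 := by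
          apply Finset.sum_eq_zero; intro k _
          rw [IH (i-1) (by omega) hi' k, zero_mul]
        have hLHS : (∑ k, T k ⟨i-1, hi'⟩ * m k j)
            = T ⟨i, hi⟩ ⟨i-1, hi'⟩ * m ⟨i, hi⟩ j := by
          apply Finset.sum_eq_single_of_mem _ (Finset.mem_univ _)
          intro k _ hk
          have hkv : (k:ℕ) ≠ i := fun h => hk (Fin.ext h)
          rcases lt_or_gt_of_ne hkv with hlt | hgt
          · have hmk := IH (k:ℕ) hlt k.isLt j
            rw [show (⟨(k:ℕ), k.isLt⟩ : Fin (d+1)) = k from Fin.ext rfl] at hmk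
            rw [hmk, mul_zero]
          · rw [hT0 k ⟨i-1, hi'⟩ (Or.inr (by simp only [Fin.val_mk]; omega)), zero_mul]
        rw [hRHS, hLHS] at hRe
        have hTne := hTn ⟨i, hi⟩ ⟨i-1, hi'⟩ (Or.inr (by simp only [Fin.val_mk]; omega))
        exact (mul_eq_zero.mp hRe).resolve_left hTne
  apply hm
  ext r s
  have := hrows (r:ℕ) r.isLt s
  rw [show (⟨(r:ℕ), r.isLt⟩ : Fin (d+1)) = r from Fin.ext rfl] at this
  simpa using this

-- bottom corner entry nonzero
lemma LB_mdd (hf : d = d' + f)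
    (T : Matrix (Fin (d+1)) (Fin (d+1)) K) (Sc : Matrix (Fin (d'+1)) (Fin (d'+1)) K)
    (m : Matrix (Fin (d+1)) (Fin (d'+1)) K)
    (hT0 : ∀ i j : Fin (d+1), ((i:ℕ)+1 < (j:ℕ) ∨ (j:ℕ)+1 < (i:ℕ)) → T i j = 0)
    (hTn : ∀ i j : Fin (d+1), ((i:ℕ)+1 = (j:ℕ) ∨ (j:ℕ)+1 = (i:ℕ)) → T i j ≠ 0)
    (hband : ∀ (i : Fin (d+1)) (j : Fin (d'+1)), ((i:ℕ) < (j:ℕ) ∨ (j:ℕ) + f < (i:ℕ)) → m i j = 0)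
    (hm : m ≠ 0) (hR : Tᵀ * m = m * Sc) :
    m ⟨d, Nat.lt_succ_self d⟩ ⟨d', Nat.lt_succ_self d'⟩ ≠ 0 := by
  intro hdd
  have hrows : ∀ s : ℕ, ∀ (hs : s ≤ d) (j : Fin (d'+1)), m ⟨d - s, by omega⟩ j = 0 := by
    intro s
    induction s using Nat.strong_induction_on with
    | _ s IH =>
      intro hs j
      rcases Nat.eq_zero_or_pos s with rfl | hpos
      · -- row d
        rcases Nat.lt_or_ge (j:ℕ) d' with hjlt | hjge
        · refine hband ⟨d - 0, by omega⟩ j (Or.inr ?_)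
          simp only [Fin.val_mk]; omega
        · have hjle : (j:ℕ) < d' + 1 := j.isLt
          have hj : j = ⟨d', Nat.lt_succ_self d'⟩ := Fin.ext (by simp only [Fin.val_mk]; omega)
          have : (⟨d - 0, by omega⟩ : Fin (d+1)) = ⟨d, Nat.lt_succ_self d⟩ := Fin.ext (by simp)
          rw [hj, this]; exact hdd
      · -- s ≥ 1, row i = d - s, use relation at row i+1 = d - (s-1)
        have hi1 : d - s + 1 < d + 1 := by omega
        have hRe := congrArg (fun X => X ⟨d - s + 1, hi1⟩ j) hR
        simp only [Matrix.mul_apply, Matrix.transpose_apply] at hRe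
        have hRHS : (∑ k, m ⟨d - s + 1, hi1⟩ k * Sc k j) = 0 := by
          apply Finset.sum_eq_zero; intro k _
          have h1 : d - s + 1 = d - (s - 1) := by omega
          have hmk := IH (s-1) (by omega) (by omega) k
          have : (⟨d - (s-1), by omega⟩ : Fin (d+1)) = ⟨d - s + 1, hi1⟩ := Fin.ext (by simp; omega)
          rw [this] at hmk
          rw [hmk, zero_mul]
        have hLHS : (∑ k, T k ⟨d - s + 1, hi1⟩ * m k j)
            = T ⟨d - s, by omega⟩ ⟨d - s + 1, hi1⟩ * m ⟨d - s, by omega⟩ j := by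
          apply Finset.sum_eq_single_of_mem _ (Finset.mem_univ _)
          intro k _ hk
          have hkv : (k:ℕ) ≠ d - s := fun h => hk (Fin.ext h)
          rcases Nat.lt_or_ge (k:ℕ) (d - s) with hlt | hge
          · rw [hT0 k ⟨d - s + 1, hi1⟩ (Or.inl (by simp only [Fin.val_mk]; omega)), zero_mul]
          · -- k ≥ d - s + 1 : rows above are zero by IH
            have hks : (k:ℕ) ≥ d - s + 1 := by omega
            have hs' : d - (k:ℕ) < s := by omega
            have hmk := IH (d - (k:ℕ)) hs' (by omega) j
            have : (⟨d - (d - (k:ℕ)), by omega⟩ : Fin (d+1)) = k := by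
              apply Fin.ext; simp only [Fin.val_mk]; omega
            rw [this] at hmk
            rw [hmk, mul_zero]
        rw [hRHS, hLHS] at hRe
        have hTne := hTn ⟨d - s, by omega⟩ ⟨d - s + 1, hi1⟩
          (Or.inl (by simp only [Fin.val_mk]))
        exact (mul_eq_zero.mp hRe).resolve_left hTne
  apply hm
  ext r s
  have hrs : (r:ℕ) = d - (d - (r:ℕ)) := by omega
  have := hrows (d - (r:ℕ)) (by omega) s
  have he : (⟨d - (d - (r:ℕ)), by omega⟩ : Fin (d+1)) = r := by
    apply Fin.ext; simp only [Fin.val_mk]; omega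
  rw [he] at this
  simpa using this

end Core

section Core2
variable {K : Type*} [Field K] {d d' f : ℕ}

-- chain relation, upper band
lemma LB_chainRelUp (T' X : Matrix (Fin (d'+1)) (Fin (d'+1)) K)
    (hT'0 : ∀ i j : Fin (d'+1), ((i:ℕ)+1 < (j:ℕ) ∨ (j:ℕ)+1 < (i:ℕ)) → T' i j = 0)
    (hcomm : X * T' = T' * X) (g : ℕ)
    (hXb : ∀ k j : Fin (d'+1), (k:ℕ) + g < (j:ℕ) → X k j = 0)
    (k : ℕ) (hk : k + g + 1 ≤ d') :
    X ⟨k, by omega⟩ ⟨k+g, by omega⟩ * T' ⟨k+g, by omega⟩ ⟨k+g+1, by omega⟩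
      = T' ⟨k, by omega⟩ ⟨k+1, by omega⟩ * X ⟨k+1, by omega⟩ ⟨k+g+1, by omega⟩ := by
  have hc := congrArg (fun Z => Z ⟨k, by omega⟩ ⟨k+g+1, by omega⟩) hcomm
  simp only [Matrix.mul_apply] at hc
  have hL : (∑ μ, X ⟨k, by omega⟩ μ * T' μ ⟨k+g+1, by omega⟩)
      = X ⟨k, by omega⟩ ⟨k+g, by omega⟩ * T' ⟨k+g, by omega⟩ ⟨k+g+1, by omega⟩ := by
    apply Finset.sum_eq_single_of_mem _ (Finset.mem_univ _)
    intro μ _ hμ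
    have hμv : (μ:ℕ) ≠ k + g := fun h => hμ (Fin.ext h)
    rcases Nat.lt_or_ge (μ:ℕ) (k+g) with hlt | hge
    · rw [hT'0 μ ⟨k+g+1, by omega⟩ (Or.inl (by simp only [Fin.val_mk]; omega)), mul_zero]
    · rw [hXb ⟨k, by omega⟩ μ (by simp only [Fin.val_mk]; omega), zero_mul]
  have hRr : (∑ μ, T' ⟨k, by omega⟩ μ * X μ ⟨k+g+1, by omega⟩)
      = T' ⟨k, by omega⟩ ⟨k+1, by omega⟩ * X ⟨k+1, by omega⟩ ⟨k+g+1, by omega⟩ := by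
    apply Finset.sum_eq_single_of_mem _ (Finset.mem_univ _)
    intro μ _ hμ
    have hμv : (μ:ℕ) ≠ k + 1 := fun h => hμ (Fin.ext h)
    rcases Nat.lt_or_ge (μ:ℕ) (k+1) with hlt | hge
    · rw [hXb μ ⟨k+g+1, by omega⟩ (by simp only [Fin.val_mk]; omega), mul_zero]
    · rw [hT'0 ⟨k, by omega⟩ μ (Or.inl (by simp only [Fin.val_mk]; omega)), zero_mul]
  rw [hL, hRr] at hc
  exact hc

lemma LB_chainUpProp (T' X : Matrix (Fin (d'+1)) (Fin (d'+1)) K)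
    (hT'0 : ∀ i j : Fin (d'+1), ((i:ℕ)+1 < (j:ℕ) ∨ (j:ℕ)+1 < (i:ℕ)) → T' i j = 0)
    (hT'n : ∀ i j : Fin (d'+1), ((i:ℕ)+1 = (j:ℕ) ∨ (j:ℕ)+1 = (i:ℕ)) → T' i j ≠ 0)
    (hcomm : X * T' = T' * X) (g : ℕ) (hg : g ≤ d')
    (hXb : ∀ k j : Fin (d'+1), (k:ℕ) + g < (j:ℕ) → X k j = 0)
    (hX0 : X ⟨0, by omega⟩ ⟨g, by omega⟩ = 0) :
    ∀ t, (ht : t + g ≤ d') → X ⟨t, by omega⟩ ⟨t+g, by omega⟩ = 0 := by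
  intro t
  induction t with
  | zero =>
    intro ht
    have h : (⟨0+g, by omega⟩ : Fin (d'+1)) = ⟨g, by omega⟩ := Fin.ext (by simp)
    rw [h]; exact hX0
  | succ t IH =>
    intro ht
    have hprev := IH (by omega)
    have hrel := LB_chainRelUp T' X hT'0 hcomm g hXb t (by omega)
    rw [hprev, zero_mul] at hrel
    have hTn := hT'n ⟨t, by omega⟩ ⟨t+1, by omega⟩ (Or.inl (by simp only [Fin.val_mk]))
    have hz := (mul_eq_zero.mp hrel.symm).resolve_left hTn
    have h : (⟨t+1+g, by omega⟩ : Fin (d'+1)) = ⟨t+g+1, by omega⟩ :=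
      Fin.ext (by simp only [Fin.val_mk]; omega)
    rw [h]; exact hz
  
-- chain relation, lower band
lemma LB_chainRelLow (T' X : Matrix (Fin (d'+1)) (Fin (d'+1)) K)
    (hT'0 : ∀ i j : Fin (d'+1), ((i:ℕ)+1 < (j:ℕ) ∨ (j:ℕ)+1 < (i:ℕ)) → T' i j = 0)
    (hcomm : X * T' = T' * X) (g : ℕ)
    (hXb : ∀ k j : Fin (d'+1), (j:ℕ) + g < (k:ℕ) → X k j = 0)
    (j : ℕ) (hj : j + g + 1 ≤ d') :
    X ⟨j+g+1, by omega⟩ ⟨j+1, by omega⟩ * T' ⟨j+1, by omega⟩ ⟨j, by omega⟩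
      = T' ⟨j+g+1, by omega⟩ ⟨j+g, by omega⟩ * X ⟨j+g, by omega⟩ ⟨j, by omega⟩ := by
  have hc := congrArg (fun Z => Z ⟨j+g+1, by omega⟩ ⟨j, by omega⟩) hcomm
  simp only [Matrix.mul_apply] at hc
  have hL : (∑ μ, X ⟨j+g+1, by omega⟩ μ * T' μ ⟨j, by omega⟩)
      = X ⟨j+g+1, by omega⟩ ⟨j+1, by omega⟩ * T' ⟨j+1, by omega⟩ ⟨j, by omega⟩ := by
    apply Finset.sum_eq_single_of_mem _ (Finset.mem_univ _)
    intro μ _ hμ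
    have hμv : (μ:ℕ) ≠ j + 1 := fun h => hμ (Fin.ext h)
    rcases Nat.lt_or_ge (μ:ℕ) (j+1) with hlt | hge
    · rw [hXb ⟨j+g+1, by omega⟩ μ (by simp only [Fin.val_mk]; omega), zero_mul]
    · rw [hT'0 μ ⟨j, by omega⟩ (Or.inr (by simp only [Fin.val_mk]; omega)), mul_zero]
  have hRr : (∑ μ, T' ⟨j+g+1, by omega⟩ μ * X μ ⟨j, by omega⟩)
      = T' ⟨j+g+1, by omega⟩ ⟨j+g, by omega⟩ * X ⟨j+g, by omega⟩ ⟨j, by omega⟩ := by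
    apply Finset.sum_eq_single_of_mem _ (Finset.mem_univ _)
    intro μ _ hμ
    have hμv : (μ:ℕ) ≠ j + g := fun h => hμ (Fin.ext h)
    rcases Nat.lt_or_ge (μ:ℕ) (j+g) with hlt | hge
    · rw [hT'0 ⟨j+g+1, by omega⟩ μ (Or.inr (by simp only [Fin.val_mk]; omega)), zero_mul]
    · rw [hXb μ ⟨j, by omega⟩ (by simp only [Fin.val_mk]; omega), mul_zero]
  rw [hL, hRr] at hc
  exact hc

lemma LB_chainLowProp (T' X : Matrix (Fin (d'+1)) (Fin (d'+1)) K)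
    (hT'0 : ∀ i j : Fin (d'+1), ((i:ℕ)+1 < (j:ℕ) ∨ (j:ℕ)+1 < (i:ℕ)) → T' i j = 0)
    (hT'n : ∀ i j : Fin (d'+1), ((i:ℕ)+1 = (j:ℕ) ∨ (j:ℕ)+1 = (i:ℕ)) → T' i j ≠ 0)
    (hcomm : X * T' = T' * X) (g : ℕ) (hg : g ≤ d')
    (hXb : ∀ k j : Fin (d'+1), (j:ℕ) + g < (k:ℕ) → X k j = 0)
    (hXtop : X ⟨d', by omega⟩ ⟨d'-g, by omega⟩ = 0) :
    ∀ j, (hj : j + g ≤ d') → X ⟨j+g, by omega⟩ ⟨j, by omega⟩ = 0 := by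
  have H : ∀ s : ℕ, ∀ j : ℕ, ∀ (hj : j + g ≤ d') (_ : d' - g - j = s),
      X ⟨j+g, by omega⟩ ⟨j, by omega⟩ = 0 := by
    intro s
    induction s with
    | zero =>
      intro j hj hs
      have hjv : j = d' - g := by omega
      have h1 : (⟨j+g, by omega⟩ : Fin (d'+1)) = ⟨d', by omega⟩ := Fin.ext (by simp only [Fin.val_mk]; omega)
      have h2 : (⟨j, by omega⟩ : Fin (d'+1)) = ⟨d'-g, by omega⟩ := Fin.ext (by simp only [Fin.val_mk]; omega)
      rw [h1, h2]; exact hXtop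
    | succ s IH =>
      intro j hj hs
      have hprev := IH (j+1) (by omega) (by omega)
      have hrel := LB_chainRelLow T' X hT'0 hcomm g hXb j (by omega)
      have h1 : (⟨j+1+g, by omega⟩ : Fin (d'+1)) = ⟨j+g+1, by omega⟩ := Fin.ext (by simp only [Fin.val_mk]; omega)
      rw [h1] at hprev
      rw [hprev, zero_mul] at hrel
      have hTn := hT'n ⟨j+g+1, by omega⟩ ⟨j+g, by omega⟩ (Or.inr (by simp only [Fin.val_mk]))
      exact (mul_eq_zero.mp hrel.symm).resolve_left hTn
  intro j hj
  exact H (d' - g - j) j hj rfl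

end Core2

section Core3
variable {K : Type*} [Field K] {d d' f : ℕ}

lemma LB_killUp (hf : d = d' + f)
    (T : Matrix (Fin (d+1)) (Fin (d+1)) K) (Sc : Matrix (Fin (d'+1)) (Fin (d'+1)) K)
    (m : Matrix (Fin (d+1)) (Fin (d'+1)) K)
    (hT0 : ∀ i j : Fin (d+1), ((i:ℕ)+1 < (j:ℕ) ∨ (j:ℕ)+1 < (i:ℕ)) → T i j = 0)
    (hband : ∀ (i : Fin (d+1)) (j : Fin (d'+1)), ((i:ℕ) < (j:ℕ) ∨ (j:ℕ) + f < (i:ℕ)) → m i j = 0)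
    (hR : Tᵀ * m = m * Sc)
    (hm00 : m ⟨0, Nat.succ_pos d⟩ ⟨0, Nat.succ_pos d'⟩ ≠ 0)
    (g : ℕ) (hg2 : 2 ≤ g) (hgd : g ≤ d') :
    Sc ⟨0, Nat.succ_pos d'⟩ ⟨g, by omega⟩ = 0 := by
  have hc := congrArg (fun Z => Z ⟨0, Nat.succ_pos d⟩ ⟨g, by omega⟩) hR
  simp only [Matrix.mul_apply, Matrix.transpose_apply] at hc
  have hL : (∑ k, T k ⟨0, Nat.succ_pos d⟩ * m k ⟨g, by omega⟩) = 0 := by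
    apply Finset.sum_eq_zero; intro k _
    rcases Nat.lt_or_ge (k:ℕ) 2 with hlt | hge
    · rw [hband k ⟨g, by omega⟩ (Or.inl (by simp only [Fin.val_mk]; omega)), mul_zero]
    · rw [hT0 k ⟨0, Nat.succ_pos d⟩ (Or.inr (by simp only [Fin.val_mk]; omega)), zero_mul]
  have hRr : (∑ k, m ⟨0, Nat.succ_pos d⟩ k * Sc k ⟨g, by omega⟩)
      = m ⟨0, Nat.succ_pos d⟩ ⟨0, Nat.succ_pos d'⟩ * Sc ⟨0, Nat.succ_pos d'⟩ ⟨g, by omega⟩ := by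
    apply Finset.sum_eq_single_of_mem _ (Finset.mem_univ _)
    intro k _ hk
    have hkv : (k:ℕ) ≠ 0 := fun h => hk (Fin.ext h)
    rw [hband ⟨0, Nat.succ_pos d⟩ k (Or.inl (by simp only [Fin.val_mk]; omega)), zero_mul]
  rw [hL, hRr] at hc
  exact (mul_eq_zero.mp hc.symm).resolve_left hm00

lemma LB_killLow (hf : d = d' + f)
    (T : Matrix (Fin (d+1)) (Fin (d+1)) K) (Sc : Matrix (Fin (d'+1)) (Fin (d'+1)) K)
    (m : Matrix (Fin (d+1)) (Fin (d'+1)) K)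
    (hT0 : ∀ i j : Fin (d+1), ((i:ℕ)+1 < (j:ℕ) ∨ (j:ℕ)+1 < (i:ℕ)) → T i j = 0)
    (hband : ∀ (i : Fin (d+1)) (j : Fin (d'+1)), ((i:ℕ) < (j:ℕ) ∨ (j:ℕ) + f < (i:ℕ)) → m i j = 0)
    (hR : Tᵀ * m = m * Sc)
    (hmdd : m ⟨d, Nat.lt_succ_self d⟩ ⟨d', Nat.lt_succ_self d'⟩ ≠ 0)
    (g : ℕ) (hg2 : 2 ≤ g) (hgd : g ≤ d') :
    Sc ⟨d', Nat.lt_succ_self d'⟩ ⟨d'-g, by omega⟩ = 0 := by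
  have hc := congrArg (fun Z => Z ⟨d, Nat.lt_succ_self d⟩ ⟨d'-g, by omega⟩) hR
  simp only [Matrix.mul_apply, Matrix.transpose_apply] at hc
  have hL : (∑ k, T k ⟨d, Nat.lt_succ_self d⟩ * m k ⟨d'-g, by omega⟩) = 0 := by
    apply Finset.sum_eq_zero; intro k _
    rcases Nat.lt_or_ge ((k:ℕ)+1) d with hlt | hge
    · rw [hT0 k ⟨d, Nat.lt_succ_self d⟩ (Or.inl (by simp only [Fin.val_mk]; omega)), zero_mul]
    · rw [hband k ⟨d'-g, by omega⟩ (Or.inr (by simp only [Fin.val_mk]; omega)), mul_zero]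
  have hRr : (∑ k, m ⟨d, Nat.lt_succ_self d⟩ k * Sc k ⟨d'-g, by omega⟩)
      = m ⟨d, Nat.lt_succ_self d⟩ ⟨d', Nat.lt_succ_self d'⟩
        * Sc ⟨d', Nat.lt_succ_self d'⟩ ⟨d'-g, by omega⟩ := by
    apply Finset.sum_eq_single_of_mem _ (Finset.mem_univ _)
    intro k _ hk
    have hkv : (k:ℕ) ≠ d' := fun h => hk (Fin.ext h)
    have hkd : (k:ℕ) < d' := by omega
    rw [hband ⟨d, Nat.lt_succ_self d⟩ k (Or.inr (by simp only [Fin.val_mk]; omega)), zero_mul]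
  rw [hL, hRr] at hc
  exact (mul_eq_zero.mp hc.symm).resolve_left hmdd

end Core3

theorem LB_core {K : Type*} [Field K] (d d' f : ℕ) (hf : d = d' + f)
    (T : Matrix (Fin (d+1)) (Fin (d+1)) K) (T' Sc : Matrix (Fin (d'+1)) (Fin (d'+1)) K)
    (m : Matrix (Fin (d+1)) (Fin (d'+1)) K)
    (hT0 : ∀ i j : Fin (d+1), ((i:ℕ)+1 < (j:ℕ) ∨ (j:ℕ)+1 < (i:ℕ)) → T i j = 0)
    (hTn : ∀ i j : Fin (d+1), ((i:ℕ)+1 = (j:ℕ) ∨ (j:ℕ)+1 = (i:ℕ)) → T i j ≠ 0)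
    (hT'0 : ∀ i j : Fin (d'+1), ((i:ℕ)+1 < (j:ℕ) ∨ (j:ℕ)+1 < (i:ℕ)) → T' i j = 0)
    (hT'n : ∀ i j : Fin (d'+1), ((i:ℕ)+1 = (j:ℕ) ∨ (j:ℕ)+1 = (i:ℕ)) → T' i j ≠ 0)
    (hband : ∀ (i : Fin (d+1)) (j : Fin (d'+1)), ((i:ℕ) < (j:ℕ) ∨ (j:ℕ) + f < (i:ℕ)) → m i j = 0)
    (hm : m ≠ 0)
    (hR : Tᵀ * m = m * Sc)
    (hcomm : Sc * T' = T' * Sc) :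
    ∃ ξ ζ : K, Sc = ξ • T' + ζ • 1 := by
  rcases Nat.eq_zero_or_pos d' with hd0 | hd1
  · subst hd0
    refine ⟨0, Sc ⟨0, Nat.one_pos⟩ ⟨0, Nat.one_pos⟩, ?_⟩
    ext i j
    have hi : i = ⟨0, Nat.one_pos⟩ := Fin.ext (by omega)
    have hj : j = ⟨0, Nat.one_pos⟩ := Fin.ext (by omega)
    rw [hi, hj]
    simp [Matrix.add_apply, Matrix.smul_apply, Matrix.one_apply]
  · have hm00 := LB_m00 hf T Sc m hT0 hTn hband hm hR
    have hmdd := LB_mdd hf T Sc m hT0 hTn hband hm hR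
    have masterU : ∀ n, n ≤ d' - 1 →
        ∀ k j : Fin (d'+1), (k:ℕ) + (d'+1-n) ≤ (j:ℕ) → Sc k j = 0 := by
      intro n
      induction n with
      | zero =>
        intro _ k j h
        exact absurd h (by have := j.isLt; omega)
      | succ n IH =>
        intro hn k j h
        have hg2 : 2 ≤ d' + 1 - (n+1) := by omega
        have hgd : d' + 1 - (n+1) ≤ d' := by omega
        set g := d' + 1 - (n+1) with hgdef
        have hXb : ∀ k j : Fin (d'+1), (k:ℕ) + g < (j:ℕ) → Sc k j = 0 := by
          intro k j hh
          exact IH (by omega) k j (by omega)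
        rcases Nat.lt_or_ge ((k:ℕ) + g) (j:ℕ) with hlt | hge2
        · exact hXb k j hlt
        · have hkill := LB_killUp hf T Sc m hT0 hband hR hm00 g hg2 hgd
          have hprop := LB_chainUpProp T' Sc hT'0 hT'n hcomm g hgd hXb hkill (k:ℕ)
            (by have := j.isLt; omega)
          have h1 : (⟨(k:ℕ), by omega⟩ : Fin (d'+1)) = k := Fin.ext rfl
          have h2 : (⟨(k:ℕ)+g, by omega⟩ : Fin (d'+1)) = j :=
            Fin.ext (by simp only [Fin.val_mk]; omega)
          rwa [h1, h2] at hprop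
    have hub : ∀ k j : Fin (d'+1), (k:ℕ) + 2 ≤ (j:ℕ) → Sc k j = 0 := by
      intro k j h
      exact masterU (d'-1) (le_refl _) k j (by omega)
    have masterL : ∀ n, n ≤ d' - 1 →
        ∀ k j : Fin (d'+1), (j:ℕ) + (d'+1-n) ≤ (k:ℕ) → Sc k j = 0 := by
      intro n
      induction n with
      | zero =>
        intro _ k j h
        exact absurd h (by have := k.isLt; omega)
      | succ n IH =>
        intro hn k j h
        have hg2 : 2 ≤ d' + 1 - (n+1) := by omega
        have hgd : d' + 1 - (n+1) ≤ d' := by omega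
        set g := d' + 1 - (n+1) with hgdef
        have hXb : ∀ k j : Fin (d'+1), (j:ℕ) + g < (k:ℕ) → Sc k j = 0 := by
          intro k j hh
          exact IH (by omega) k j (by omega)
        rcases Nat.lt_or_ge ((j:ℕ) + g) (k:ℕ) with hlt | hge2
        · exact hXb k j hlt
        · have hkill := LB_killLow hf T Sc m hT0 hband hR hmdd g hg2 hgd
          have hprop := LB_chainLowProp T' Sc hT'0 hT'n hcomm g hgd hXb hkill (j:ℕ)
            (by have := k.isLt; omega)
          have h1 : (⟨(j:ℕ)+g, by omega⟩ : Fin (d'+1)) = k :=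
            Fin.ext (by simp only [Fin.val_mk]; omega)
          have h2 : (⟨(j:ℕ), by omega⟩ : Fin (d'+1)) = j := Fin.ext rfl
          rwa [h1, h2] at hprop
    have hlb : ∀ k j : Fin (d'+1), (j:ℕ) + 2 ≤ (k:ℕ) → Sc k j = 0 := by
      intro k j h
      exact masterL (d'-1) (le_refl _) k j (by omega)
    have hT01ne : T' ⟨0, by omega⟩ ⟨1, by omega⟩ ≠ 0 :=
      hT'n _ _ (Or.inl (by simp only [Fin.val_mk]))
    set ξ := Sc ⟨0, by omega⟩ ⟨1, by omega⟩ / T' ⟨0, by omega⟩ ⟨1, by omega⟩ with hxidef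
    set R := Sc - ξ • T' with hRdef
    have hRcomm : R * T' = T' * R := by
      rw [hRdef, Matrix.sub_mul, Matrix.mul_sub, hcomm, Matrix.smul_mul, Matrix.mul_smul]
    have hRub : ∀ k j : Fin (d'+1), (k:ℕ) + 1 < (j:ℕ) → R k j = 0 := by
      intro k j h
      rw [hRdef, Matrix.sub_apply, Matrix.smul_apply, hub k j (by omega),
        hT'0 k j (Or.inl h), smul_zero, sub_zero]
    have hRlb : ∀ k j : Fin (d'+1), (j:ℕ) + 1 < (k:ℕ) → R k j = 0 := by
      intro k j h
      rw [hRdef, Matrix.sub_apply, Matrix.smul_apply, hlb k j (by omega),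
        hT'0 k j (Or.inr h), smul_zero, sub_zero]
    have hR01 : R ⟨0, by omega⟩ ⟨1, by omega⟩ = 0 := by
      rw [hRdef, Matrix.sub_apply, Matrix.smul_apply, smul_eq_mul, hxidef,
        div_mul_cancel₀ _ hT01ne, sub_self]
    have hRsup : ∀ t, ∀ (ht : t + 1 ≤ d'), R ⟨t, by omega⟩ ⟨t+1, by omega⟩ = 0 := by
      intro t ht
      exact LB_chainUpProp T' R hT'0 hT'n hRcomm 1 hd1
        (fun k j h => hRub k j (by omega)) hR01 t ht
    have hRsupF : ∀ a b : Fin (d'+1), (a:ℕ) + 1 = (b:ℕ) → R a b = 0 := by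
      intro a b hab
      have h1 : (a:ℕ) + 1 ≤ d' := by have := b.isLt; omega
      have h := hRsup (a:ℕ) h1
      have ha : (⟨(a:ℕ), by omega⟩ : Fin (d'+1)) = a := Fin.ext rfl
      have hb : (⟨(a:ℕ)+1, by omega⟩ : Fin (d'+1)) = b :=
        Fin.ext (by simp only [Fin.val_mk]; omega)
      rwa [ha, hb] at h
    have hdiagstep : ∀ t, ∀ (ht : t + 1 ≤ d'),
        R ⟨t, by omega⟩ ⟨t, by omega⟩ = R ⟨t+1, by omega⟩ ⟨t+1, by omega⟩ := by
      intro t ht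
      have hc := congrArg (fun Z => Z ⟨t, by omega⟩ ⟨t+1, by omega⟩) hRcomm
      simp only [Matrix.mul_apply] at hc
      have hL : (∑ μ, R ⟨t, by omega⟩ μ * T' μ ⟨t+1, by omega⟩)
          = R ⟨t, by omega⟩ ⟨t, by omega⟩ * T' ⟨t, by omega⟩ ⟨t+1, by omega⟩ := by
        apply Finset.sum_eq_single_of_mem _ (Finset.mem_univ _)
        intro μ _ hμ
        have hμv : (μ:ℕ) ≠ t := fun h => hμ (Fin.ext h)
        rcases Nat.lt_or_ge (μ:ℕ) t with hlt | hge
        · rw [hT'0 μ ⟨t+1, by omega⟩ (Or.inl (by simp only [Fin.val_mk]; omega)), mul_zero]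
        · rcases Nat.lt_or_ge (μ:ℕ) (t+1) with hlt1 | hge1
          · exact absurd (by omega) hμv
          · rcases Nat.lt_or_ge (μ:ℕ) (t+2) with hlt2 | hge2
            · rw [hRsupF ⟨t, by omega⟩ μ (by simp only [Fin.val_mk]; omega), zero_mul]
            · rw [hRub ⟨t, by omega⟩ μ (by simp only [Fin.val_mk]; omega), zero_mul]
      have hRr : (∑ μ, T' ⟨t, by omega⟩ μ * R μ ⟨t+1, by omega⟩)
          = T' ⟨t, by omega⟩ ⟨t+1, by omega⟩ * R ⟨t+1, by omega⟩ ⟨t+1, by omega⟩ := by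
        apply Finset.sum_eq_single_of_mem _ (Finset.mem_univ _)
        intro μ _ hμ
        have hμv : (μ:ℕ) ≠ t+1 := fun h => hμ (Fin.ext h)
        rcases Nat.lt_or_ge (μ:ℕ) t with hlt | hge
        · rw [hRub μ ⟨t+1, by omega⟩ (by simp only [Fin.val_mk]; omega), mul_zero]
        · rcases Nat.lt_or_ge (μ:ℕ) (t+1) with hlt1 | hge1
          · rw [hRsupF μ ⟨t+1, by omega⟩ (by simp only [Fin.val_mk]; omega), mul_zero]
          · rw [hT'0 ⟨t, by omega⟩ μ (Or.inl (by simp only [Fin.val_mk]; omega)), zero_mul]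
      rw [hL, hRr] at hc
      have hTtne := hT'n ⟨t, by omega⟩ ⟨t+1, by omega⟩ (Or.inl (by simp only [Fin.val_mk]))
      rw [mul_comm (R ⟨t, by omega⟩ ⟨t, by omega⟩) (T' ⟨t, by omega⟩ ⟨t+1, by omega⟩)] at hc
      exact mul_left_cancel₀ hTtne hc
    have hdiag : ∀ t, ∀ (ht : t ≤ d'),
        R ⟨t, by omega⟩ ⟨t, by omega⟩ = R ⟨0, by omega⟩ ⟨0, by omega⟩ := by
      intro t
      induction t with
      | zero => intro _; rfl
      | succ t IH =>
        intro ht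
        rw [← hdiagstep t (by omega)]
        exact IH (by omega)
    set ζ := R ⟨0, by omega⟩ ⟨0, by omega⟩ with hzdef
    set N := R - ζ • (1 : Matrix (Fin (d'+1)) (Fin (d'+1)) K) with hNdef
    have hNcomm : N * T' = T' * N := by
      rw [hNdef, Matrix.sub_mul, Matrix.mul_sub, hRcomm, Matrix.smul_mul, Matrix.mul_smul,
        Matrix.one_mul, Matrix.mul_one]
    have hNdiagF : ∀ a b : Fin (d'+1), (a:ℕ) = (b:ℕ) → N a b = 0 := by
      intro a b hab
      have hba : b = a := Fin.ext hab.symm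
      rw [hba]
      rw [hNdef, Matrix.sub_apply, Matrix.smul_apply, Matrix.one_apply_eq, smul_eq_mul,
        mul_one]
      have h := hdiag (a:ℕ) (by have := a.isLt; omega)
      have ha : (⟨(a:ℕ), by omega⟩ : Fin (d'+1)) = a := Fin.ext rfl
      rw [ha] at h
      rw [h]
      exact sub_self _
    have hNoff : ∀ k j : Fin (d'+1), (k:ℕ) ≠ (j:ℕ) → N k j = R k j := by
      intro k j h
      rw [hNdef, Matrix.sub_apply, Matrix.smul_apply,
        Matrix.one_apply_ne (fun hc => h (congrArg Fin.val hc)), smul_zero, sub_zero]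
    have hkey : ∀ s, ∀ (hs : s + 1 ≤ d'),
        (∀ b : Fin (d'+1), (b:ℕ) + 1 = s → N ⟨s, by omega⟩ b = 0) →
        N ⟨s+1, by omega⟩ ⟨s, by omega⟩ = 0 := by
      intro s hs hprev
      have hc := congrArg (fun Z => Z ⟨s, by omega⟩ ⟨s, by omega⟩) hNcomm
      simp only [Matrix.mul_apply] at hc
      have hL : (∑ μ, N ⟨s, by omega⟩ μ * T' μ ⟨s, by omega⟩) = 0 := by
        apply Finset.sum_eq_zero
        intro μ _
        rcases Nat.lt_or_ge ((μ:ℕ)+1) s with hlt | hge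
        · rw [hT'0 μ ⟨s, by omega⟩ (Or.inl (by simp only [Fin.val_mk]; omega)), mul_zero]
        · rcases Nat.lt_or_ge (μ:ℕ) s with hlt1 | hge1
          · rw [hprev μ (by omega), zero_mul]
          · rcases Nat.lt_or_ge (μ:ℕ) (s+1) with hlt2 | hge2
            · rw [hNdiagF ⟨s, by omega⟩ μ (by simp only [Fin.val_mk]; omega), zero_mul]
            · rcases Nat.lt_or_ge (μ:ℕ) (s+2) with hlt3 | hge3
              · rw [hNoff ⟨s, by omega⟩ μ (by simp only [Fin.val_mk]; omega),
                  hRsupF ⟨s, by omega⟩ μ (by simp only [Fin.val_mk]; omega), zero_mul]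
              · rw [hNoff ⟨s, by omega⟩ μ (by simp only [Fin.val_mk]; omega),
                  hRub ⟨s, by omega⟩ μ (by simp only [Fin.val_mk]; omega), zero_mul]
      have hRr : (∑ μ, T' ⟨s, by omega⟩ μ * N μ ⟨s, by omega⟩)
          = T' ⟨s, by omega⟩ ⟨s+1, by omega⟩ * N ⟨s+1, by omega⟩ ⟨s, by omega⟩ := by
        apply Finset.sum_eq_single_of_mem _ (Finset.mem_univ _)
        intro μ _ hμ
        have hμv : (μ:ℕ) ≠ s+1 := fun h => hμ (Fin.ext h)
        rcases Nat.lt_or_ge ((μ:ℕ)+1) s with hlt | hge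
        · rw [hNoff μ ⟨s, by omega⟩ (by simp only [Fin.val_mk]; omega),
            hRub μ ⟨s, by omega⟩ (by simp only [Fin.val_mk]; omega), mul_zero]
        · rcases Nat.lt_or_ge (μ:ℕ) s with hlt1 | hge1
          · rw [hNoff μ ⟨s, by omega⟩ (by simp only [Fin.val_mk]; omega),
              hRsupF μ ⟨s, by omega⟩ (by simp only [Fin.val_mk]; omega), mul_zero]
          · rcases Nat.lt_or_ge (μ:ℕ) (s+1) with hlt2 | hge2
            · rw [hNdiagF μ ⟨s, by omega⟩ (by simp only [Fin.val_mk]; omega), mul_zero]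
            · rw [hT'0 ⟨s, by omega⟩ μ (Or.inl (by simp only [Fin.val_mk]; omega)), zero_mul]
      rw [hL, hRr] at hc
      have hTsne := hT'n ⟨s, by omega⟩ ⟨s+1, by omega⟩ (Or.inl (by simp only [Fin.val_mk]))
      exact (mul_eq_zero.mp hc.symm).resolve_left hTsne
    have hNsubF : ∀ a b : Fin (d'+1), (b:ℕ) + 1 = (a:ℕ) → N a b = 0 := by
      suffices h : ∀ t, ∀ (ht : t + 1 ≤ d'), N ⟨t+1, by omega⟩ ⟨t, by omega⟩ = 0 by
        intro a b hba
        have h1 := h (b:ℕ) (by have := a.isLt; omega)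
        have ha : (⟨(b:ℕ)+1, by omega⟩ : Fin (d'+1)) = a :=
          Fin.ext (by simp only [Fin.val_mk]; omega)
        have hb : (⟨(b:ℕ), by omega⟩ : Fin (d'+1)) = b := Fin.ext rfl
        rwa [ha, hb] at h1
      intro t
      induction t with
      | zero =>
        intro ht
        exact hkey 0 ht (fun b hb => absurd hb (by omega))
      | succ t IH =>
        intro ht
        refine hkey (t+1) ht (fun b hb => ?_)
        have hbe : b = ⟨t, by omega⟩ := Fin.ext (by simp only [Fin.val_mk]; omega)
        rw [hbe]
        exact IH (by omega)
    have hN0 : N = 0 := by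
      ext k j
      rw [Matrix.zero_apply]
      rcases Nat.lt_trichotomy (k:ℕ) (j:ℕ) with hlt | heq | hgt
      · rcases Nat.lt_or_ge ((k:ℕ)+1) (j:ℕ) with h2 | h2
        · rw [hNoff k j (by omega)]
          exact hRub k j h2
        · rw [hNoff k j (by omega)]
          exact hRsupF k j (by omega)
      · exact hNdiagF k j heq
      · rcases Nat.lt_or_ge ((j:ℕ)+1) (k:ℕ) with h2 | h2
        · rw [hNoff k j (by omega)]
          exact hRlb k j h2
        · exact hNsubF k j (by omega)
    refine ⟨ξ, ζ, ?_⟩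
    have h1 : R - ζ • (1 : Matrix (Fin (d'+1)) (Fin (d'+1)) K) = 0 := by
      rw [← hNdef]; exact hN0
    have h2 : R = ζ • (1 : Matrix (Fin (d'+1)) (Fin (d'+1)) K) := sub_eq_zero.mp h1
    rw [hRdef] at h2
    rw [sub_eq_iff_eq_add] at h2
    rw [h2]
    exact add_comm _ _

/-- If `(·|·)` is `ρ`-balanced with respect to `Φ, Φ'`, and `σ : D* → D*'` is the algebra
homomorphism with `E_i*^σ = E_{i−ρ}*'` (so that `A*^σ = ∑_{j=0}^{d'} θ*_{ρ+j} E_j*'`), then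
there are `ξ*, ζ* ∈ K` with `A*' = ξ* A*^σ + ζ* I'`; equivalently
`θ_i*' = ξ* θ*_{ρ+i} + ζ*` for `0 ≤ i ≤ d'`. -/
theorem stmt_12 {K : Type*} [Field K] {d d' ρ : ℕ} (hdd : d' ≤ d) (hρ : ρ ≤ d - d')
    (Φ : LeonardSystem K d) (Φ' : LeonardSystem K d')
    (B : (Fin (d+1) → K) →ₗ[K] (Fin (d'+1) → K) →ₗ[K] K)
    (hB : IsBalancedForm Φ Φ' ρ B) :
    ∃ ξ ζ : K,
      Φ'.Astar = ξ • (∑ j ∈ Finset.range (d' + 1), Φ.thetastar (ρ + j) • Φ'.Estar j) +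
        ζ • (1 : Matrix (Fin (d'+1)) (Fin (d'+1)) K) ∧
      ∀ i ≤ d', Φ'.thetastar i = ξ * Φ.thetastar (ρ + i) + ζ := by
  classical
  obtain ⟨hBne, hB1, hB2⟩ := hB
  by_cases hd0 : d' = 0
  · -- trivial case d' = 0
    subst hd0
    have hE0 : Φ'.Estar 0 = 1 := by
      have h := Φ'.sumEstar
      rwa [Finset.range_one, Finset.sum_singleton] at h
    have hA0 : Φ'.Astar = Φ'.thetastar 0 • (1 : Matrix (Fin 1) (Fin 1) K) := by
      calc Φ'.Astar = Φ'.Astar * Φ'.Estar 0 := by rw [hE0, Matrix.mul_one]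
        _ = Φ'.thetastar 0 • Φ'.Estar 0 := Φ'.AstarEstar 0 (le_refl 0)
        _ = Φ'.thetastar 0 • (1 : Matrix (Fin 1) (Fin 1) K) := by rw [hE0]
    refine ⟨0, Φ'.thetastar 0, ?_, ?_⟩
    · rw [hA0]; simp
    · intro i hi
      have : i = 0 := Nat.le_zero.mp hi
      subst this
      rw [zero_mul, zero_add]
  · have hd1 : 1 ≤ d' := Nat.one_le_iff_ne_zero.mpr hd0
    set f := d - d' with hfdef
    have hf : d = d' + f := by omega
    have hρd : ρ + d' ≤ d := by omega
    set M : Matrix (Fin (d+1)) (Fin (d'+1)) K := mkM B with hMdef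
    have hMne : M ≠ 0 := LB_mkM_ne B hBne
    have hB1M : ∀ i j : ℕ, i ≤ d → j ≤ d' → i ≠ j + ρ →
        (Φ.Estar i)ᵀ * M * (Φ'.Estar j) = 0 :=
      fun i j hi hj hne => LB_form_matrix_zero B _ _ (hB1 i j hi hj hne)
    have hB2M : ∀ i j : ℕ, i ≤ d → j ≤ d' → (i < j ∨ j + f < i) →
        (Φ.E i)ᵀ * M * (Φ'.E j) = 0 :=
      fun i j hi hj hor => LB_form_matrix_zero B _ _ (hB2 i j hi hj hor)
    set S : Matrix (Fin (d'+1)) (Fin (d'+1)) K :=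
      ∑ j ∈ Finset.range (d'+1), Φ.thetastar (ρ + j) • Φ'.Estar j with hS
    have hsumT : (∑ i ∈ Finset.range (d+1), (Φ.Estar i)ᵀ) = 1 := by
      rw [← Matrix.transpose_sum, Φ.sumEstar, Matrix.transpose_one]
    -- S * E_l*' = θ*_{ρ+l} E_l*'
    have hSE : ∀ l ≤ d', S * Φ'.Estar l = Φ.thetastar (ρ + l) • Φ'.Estar l := by
      intro l hl
      rw [hS, Finset.sum_mul]
      rw [Finset.sum_eq_single_of_mem l (Finset.mem_range.mpr (by omega))]
      · rw [Matrix.smul_mul, Φ'.EstarEstar]; simp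
      · intro i hi hne
        rw [Matrix.smul_mul, Φ'.EstarEstar]
        simp [hne]
    -- R1
    have hR1 : Φ.Astarᵀ * M = M * S := by
      have hAT : Φ.Astarᵀ = ∑ i ∈ Finset.range (d+1), Φ.thetastar i • (Φ.Estar i)ᵀ := by
        rw [LB_Astar_eq Φ, Matrix.transpose_sum]
        exact Finset.sum_congr rfl fun i _ => Matrix.transpose_smul _ _
      have hL : Φ.Astarᵀ * M =
          ∑ j ∈ Finset.range (d'+1),
            Φ.thetastar (ρ+j) • ((Φ.Estar (ρ+j))ᵀ * M * Φ'.Estar j) := by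
        conv_lhs => rw [← Matrix.mul_one (Φ.Astarᵀ * M), ← Φ'.sumEstar]
        rw [Matrix.mul_sum]
        refine Finset.sum_congr rfl fun j hj => ?_
        have hj' : j ≤ d' := Nat.lt_succ_iff.mp (Finset.mem_range.mp hj)
        calc Φ.Astarᵀ * M * Φ'.Estar j
            = (∑ i ∈ Finset.range (d+1), Φ.thetastar i • (Φ.Estar i)ᵀ) * M * Φ'.Estar j := by
              rw [← hAT]
          _ = ∑ i ∈ Finset.range (d+1),
                Φ.thetastar i • ((Φ.Estar i)ᵀ * M * Φ'.Estar j) := by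
              rw [Matrix.sum_mul, Matrix.sum_mul]
              exact Finset.sum_congr rfl fun i _ => by
                rw [Matrix.smul_mul, Matrix.smul_mul]
          _ = Φ.thetastar (ρ+j) • ((Φ.Estar (ρ+j))ᵀ * M * Φ'.Estar j) := by
              rw [Finset.sum_eq_single_of_mem (ρ+j) (Finset.mem_range.mpr (by omega))]
              intro i hi hne
              rw [hB1M i j (Nat.lt_succ_iff.mp (Finset.mem_range.mp hi)) hj' (by omega),
                smul_zero]
      have hRr : M * S =
          ∑ j ∈ Finset.range (d'+1),
            Φ.thetastar (ρ+j) • ((Φ.Estar (ρ+j))ᵀ * M * Φ'.Estar j) := by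
        rw [hS, Matrix.mul_sum]
        refine Finset.sum_congr rfl fun j hj => ?_
        have hj' : j ≤ d' := Nat.lt_succ_iff.mp (Finset.mem_range.mp hj)
        rw [Matrix.mul_smul]
        congr 1
        calc M * Φ'.Estar j
            = (∑ i ∈ Finset.range (d+1), (Φ.Estar i)ᵀ) * (M * Φ'.Estar j) := by
              rw [hsumT, Matrix.one_mul]
          _ = ∑ i ∈ Finset.range (d+1), (Φ.Estar i)ᵀ * M * Φ'.Estar j := by
              rw [Matrix.sum_mul]
              exact Finset.sum_congr rfl fun i _ => by rw [Matrix.mul_assoc]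
          _ = (Φ.Estar (ρ+j))ᵀ * M * Φ'.Estar j := by
              rw [Finset.sum_eq_single_of_mem (ρ+j) (Finset.mem_range.mpr (by omega))]
              intro i hi hne
              exact hB1M i j (Nat.lt_succ_iff.mp (Finset.mem_range.mp hi)) hj' (by omega)
      rw [hL, hRr]
    -- S commutes with Astar'
    have hScomm : S * Φ'.Astar = Φ'.Astar * S := by
      rw [hS, Finset.sum_mul, Finset.mul_sum]
      refine Finset.sum_congr rfl fun j hj => ?_
      have hj' : j ≤ d' := Nat.lt_succ_iff.mp (Finset.mem_range.mp hj)
      rw [Matrix.smul_mul, Matrix.mul_smul, LB_Estar_mul_Astar Φ' j hj', Φ'.AstarEstar j hj']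
    -- scalarization
    obtain ⟨Q, Qi, hQQi, hQiQ, hQE⟩ := LB_exists_basis Φ.E Φ.E_ne Φ.EE
    obtain ⟨Q', Qi', hQ'Qi', hQi'Q', hQ'E⟩ := LB_exists_basis Φ'.E Φ'.E_ne Φ'.EE
    have hQT : Qᵀ * Qiᵀ = 1 := by rw [← Matrix.transpose_mul, hQiQ, Matrix.transpose_one]
    have hQiT : Qiᵀ * Qᵀ = 1 := by rw [← Matrix.transpose_mul, hQQi, Matrix.transpose_one]
    set T : Matrix (Fin (d+1)) (Fin (d+1)) K := Qi * Φ.Astar * Q with hT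
    set T' : Matrix (Fin (d'+1)) (Fin (d'+1)) K := Qi' * Φ'.Astar * Q' with hT'
    set Sc : Matrix (Fin (d'+1)) (Fin (d'+1)) K := Qi' * S * Q' with hSc
    set m : Matrix (Fin (d+1)) (Fin (d'+1)) K := Qᵀ * M * Q' with hmdef
    have hEiT : ∀ i : Fin (d+1), (Φ.E (i:ℕ))ᵀ = Qiᵀ * Matrix.single i i 1 * Qᵀ := by
      intro i
      rw [hQE i]
      simp only [Matrix.transpose_mul, LB_sdb_transpose, Matrix.mul_assoc]
    have hT0 : ∀ i j : Fin (d+1), ((i:ℕ)+1 < (j:ℕ) ∨ (j:ℕ)+1 < (i:ℕ)) → T i j = 0 := by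
      intro i j hc
      exact (LB_block_zero_iff Q Qi Q Qi hQiQ hQiQ (Φ.E (i:ℕ)) (Φ.E (j:ℕ)) Φ.Astar i j
        (hQE i) (hQE j)).mp
        (Φ.dtrid_far (i:ℕ) (j:ℕ) (Nat.lt_succ_iff.mp i.isLt) (Nat.lt_succ_iff.mp j.isLt) hc)
    have hTn : ∀ i j : Fin (d+1), ((i:ℕ)+1 = (j:ℕ) ∨ (j:ℕ)+1 = (i:ℕ)) → T i j ≠ 0 := by
      intro i j hc h0
      exact (Φ.dtrid_near (i:ℕ) (j:ℕ) (Nat.lt_succ_iff.mp i.isLt) (Nat.lt_succ_iff.mp j.isLt) hc)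
        ((LB_block_zero_iff Q Qi Q Qi hQiQ hQiQ (Φ.E (i:ℕ)) (Φ.E (j:ℕ)) Φ.Astar i j
        (hQE i) (hQE j)).mpr h0)
    have hT'0 : ∀ i j : Fin (d'+1), ((i:ℕ)+1 < (j:ℕ) ∨ (j:ℕ)+1 < (i:ℕ)) → T' i j = 0 := by
      intro i j hc
      exact (LB_block_zero_iff Q' Qi' Q' Qi' hQi'Q' hQi'Q' (Φ'.E (i:ℕ)) (Φ'.E (j:ℕ)) Φ'.Astar i j
        (hQ'E i) (hQ'E j)).mp
        (Φ'.dtrid_far (i:ℕ) (j:ℕ) (Nat.lt_succ_iff.mp i.isLt) (Nat.lt_succ_iff.mp j.isLt) hc)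
    have hT'n : ∀ i j : Fin (d'+1), ((i:ℕ)+1 = (j:ℕ) ∨ (j:ℕ)+1 = (i:ℕ)) → T' i j ≠ 0 := by
      intro i j hc h0
      exact (Φ'.dtrid_near (i:ℕ) (j:ℕ) (Nat.lt_succ_iff.mp i.isLt) (Nat.lt_succ_iff.mp j.isLt) hc)
        ((LB_block_zero_iff Q' Qi' Q' Qi' hQi'Q' hQi'Q' (Φ'.E (i:ℕ)) (Φ'.E (j:ℕ)) Φ'.Astar i j
        (hQ'E i) (hQ'E j)).mpr h0)
    have hband : ∀ (i : Fin (d+1)) (j : Fin (d'+1)),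
        ((i:ℕ) < (j:ℕ) ∨ (j:ℕ) + f < (i:ℕ)) → m i j = 0 := by
      intro i j hc
      exact (LB_block_zero_iff Qiᵀ Qᵀ Q' Qi' hQT hQi'Q' ((Φ.E (i:ℕ))ᵀ) (Φ'.E (j:ℕ)) M i j
        (hEiT i) (hQ'E j)).mp
        (hB2M (i:ℕ) (j:ℕ) (Nat.lt_succ_iff.mp i.isLt) (Nat.lt_succ_iff.mp j.isLt) hc)
    have hmne : m ≠ 0 := by
      intro h0
      apply hMne
      have : M = Qiᵀ * m * Qi' := by
        rw [hmdef]
        calc M = (Qiᵀ * Qᵀ) * M * (Q' * Qi') := by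
              rw [hQiT, hQ'Qi', Matrix.one_mul, Matrix.mul_one]
          _ = Qiᵀ * (Qᵀ * M * Q') * Qi' := by simp only [Matrix.mul_assoc]
      rw [this, h0, Matrix.mul_zero, Matrix.zero_mul]
    have hRc : Tᵀ * m = m * Sc := by
      have h1 : Tᵀ * m = Qᵀ * (Φ.Astarᵀ * M) * Q' := by
        rw [hT, hmdef]
        calc (Qi * Φ.Astar * Q)ᵀ * (Qᵀ * M * Q')
            = (Qᵀ * (Φ.Astarᵀ * Qiᵀ)) * (Qᵀ * M * Q') := by
              simp only [Matrix.transpose_mul, Matrix.mul_assoc]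
          _ = Qᵀ * (Φ.Astarᵀ * ((Qiᵀ * Qᵀ) * (M * Q'))) := by simp only [Matrix.mul_assoc]
          _ = Qᵀ * (Φ.Astarᵀ * (M * Q')) := by rw [hQiT, Matrix.one_mul]
          _ = Qᵀ * (Φ.Astarᵀ * M) * Q' := by simp only [Matrix.mul_assoc]
      have h2 : m * Sc = Qᵀ * (M * S) * Q' := by
        rw [hmdef, hSc]
        calc (Qᵀ * M * Q') * (Qi' * S * Q')
            = Qᵀ * (M * ((Q' * Qi') * (S * Q'))) := by simp only [Matrix.mul_assoc]
          _ = Qᵀ * (M * (S * Q')) := by rw [hQ'Qi', Matrix.one_mul]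
          _ = Qᵀ * (M * S) * Q' := by simp only [Matrix.mul_assoc]
      rw [h1, h2, hR1]
    have hcommc : Sc * T' = T' * Sc := by
      rw [hSc, hT']
      calc (Qi' * S * Q') * (Qi' * Φ'.Astar * Q')
          = Qi' * (S * ((Q' * Qi') * (Φ'.Astar * Q'))) := by simp only [Matrix.mul_assoc]
        _ = Qi' * (S * Φ'.Astar) * Q' := by
            rw [hQ'Qi', Matrix.one_mul]; simp only [Matrix.mul_assoc]
        _ = Qi' * (Φ'.Astar * S) * Q' := by rw [hScomm]
        _ = Qi' * (Φ'.Astar * ((Q' * Qi') * (S * Q'))) := by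
            rw [hQ'Qi', Matrix.one_mul]; simp only [Matrix.mul_assoc]
        _ = (Qi' * Φ'.Astar * Q') * (Qi' * S * Q') := by simp only [Matrix.mul_assoc]
    obtain ⟨ξ', ζ', hScT⟩ := LB_core d d' f hf T T' Sc m hT0 hTn hT'0 hT'n hband hmne hRc hcommc
    -- back-conjugation: S = ξ' • Astar' + ζ' • 1
    have hSA : S = ξ' • Φ'.Astar + ζ' • 1 := by
      have hback : S = Q' * Sc * Qi' := by
        rw [hSc]
        calc S = (Q' * Qi') * S * (Q' * Qi') := by
              rw [hQ'Qi', Matrix.one_mul, Matrix.mul_one]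
          _ = Q' * (Qi' * S * Q') * Qi' := by simp only [Matrix.mul_assoc]
      have hT'back : Q' * T' * Qi' = Φ'.Astar := by
        rw [hT']
        calc Q' * (Qi' * Φ'.Astar * Q') * Qi'
            = (Q' * Qi') * Φ'.Astar * (Q' * Qi') := by simp only [Matrix.mul_assoc]
          _ = Φ'.Astar := by rw [hQ'Qi', Matrix.one_mul, Matrix.mul_one]
      rw [hback, hScT, Matrix.mul_add, Matrix.add_mul, Matrix.mul_smul, Matrix.smul_mul,
        Matrix.mul_smul, Matrix.smul_mul, Matrix.mul_one, hQ'Qi']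
      rw [← Matrix.mul_assoc] at hT'back ⊢
      rw [hT'back]
    -- scalar identities
    have htheta' : ∀ l ≤ d', Φ.thetastar (ρ + l) = ξ' * Φ'.thetastar l + ζ' := by
      intro l hl
      have h1 := hSE l hl
      have h2 : S * Φ'.Estar l = (ξ' * Φ'.thetastar l + ζ') • Φ'.Estar l := by
        rw [hSA, Matrix.add_mul, Matrix.smul_mul, Matrix.smul_mul, Φ'.AstarEstar l hl,
          Matrix.one_mul, smul_smul, add_smul]
      have h3 : (Φ.thetastar (ρ + l) - (ξ' * Φ'.thetastar l + ζ')) • Φ'.Estar l = 0 := by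
        rw [sub_smul, ← h1, ← h2, sub_self]
      rcases smul_eq_zero.mp h3 with h | h
      · exact sub_eq_zero.mp h
      · exact absurd h (Φ'.Estar_ne l hl)
    have hxne : ξ' ≠ 0 := by
      intro h0
      have e0 := htheta' 0 (by omega)
      have e1 := htheta' 1 hd1
      rw [h0, zero_mul, zero_add] at e0 e1
      have : ρ + 0 = ρ + 1 :=
        Φ.thetastar_inj (by simp only [Set.mem_Iic]; omega) (by simp only [Set.mem_Iic]; omega)
          (e0.trans e1.symm)
      omega
    refine ⟨ξ'⁻¹, -(ζ' * ξ'⁻¹), ?_, ?_⟩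
    · -- matrix identity
      have h4 : ξ' • Φ'.Astar = S - ζ' • 1 := by rw [hSA]; abel
      have h5 : Φ'.Astar = ξ'⁻¹ • (S - ζ' • (1 : Matrix (Fin (d'+1)) (Fin (d'+1)) K)) := by
        rw [← h4, smul_smul, inv_mul_cancel₀ hxne, one_smul]
      rw [h5, smul_sub, smul_smul]
      rw [sub_eq_add_neg, ← neg_smul]
      congr 2
      ring
    · intro i hi
      have h := htheta' i hi
      rw [h]
      field_simp
      ring
end

section
/- Let Φ be a Leonard system with parameter array ({θ_i}; {θ_i*}; {φ_i}; {ϕ_i}), and define the dual switching element S* = Σ_{ℓ=0}^d (ϕ_1⋯ϕ_ℓ)/(φ_1⋯φ_ℓ) E_ℓ*. Then S* E_0 V = E_d V. -/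
open Matrix

/-- Lower bidiagonal matrix with diagonal `θ_0, …, θ_d` and all subdiagonal entries `1`. -/
def lowerBidiag {K : Type*} [Field K] (d : ℕ) (θ : ℕ → K) : Matrix (Fin (d+1)) (Fin (d+1)) K :=
  Matrix.of fun i j => if (i : ℕ) = (j : ℕ) then θ (i : ℕ)
    else if (j : ℕ) + 1 = (i : ℕ) then 1 else 0

/-- Upper bidiagonal matrix with diagonal `θ*_0, …, θ*_d` and superdiagonal entries
`φ_1, …, φ_d` (the `(i, i+1)` entry is `φ_{i+1}`). -/
def upperBidiag {K : Type*} [Field K] (d : ℕ) (θs φ : ℕ → K) : Matrix (Fin (d+1)) (Fin (d+1)) K :=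
  Matrix.of fun i j => if (i : ℕ) = (j : ℕ) then θs (i : ℕ)
    else if (i : ℕ) + 1 = (j : ℕ) then φ (j : ℕ) else 0

/-- `(φ_i)_{i=1}^d`, `(ϕ_i)_{i=1}^d` form the split-parameter part of the parameter array of
the Leonard system `Φ`: in some basis `A`, `A*` take the split (bidiagonal) form with diagonal
entries `θ_i`, resp. `θ*_i`, subdiagonal entries `1` and superdiagonal entries `φ_i`; and `ϕ`
is the corresponding sequence for `Φ^⇓` (i.e. for the reversed eigenvalue ordering). -/
def HasParameterArray {K : Type*} [Field K] {d : ℕ} (Φ : LeonardSystem K d)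
    (φ ϕ : ℕ → K) : Prop :=
  (∃ P : Matrix (Fin (d+1)) (Fin (d+1)) K, IsUnit P ∧
    Φ.A * P = P * lowerBidiag d Φ.theta ∧
    Φ.Astar * P = P * upperBidiag d Φ.thetastar φ) ∧
  (∃ Q : Matrix (Fin (d+1)) (Fin (d+1)) K, IsUnit Q ∧
    Φ.A * Q = Q * lowerBidiag d (fun i => Φ.theta (d - i)) ∧
    Φ.Astar * Q = Q * upperBidiag d Φ.thetastar ϕ)

namespace Stmt13Aux

variable {K : Type*} [Field K] {d : ℕ}

/-- standard basis vector indexed by a natural number (zero if out of range). -/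
def ee (K : Type*) [Field K] (d : ℕ) (j : ℕ) : Fin (d+1) → K :=
  fun i => if (i : ℕ) = j then 1 else 0

lemma ee_top (j : ℕ) (hj : d < j) : ee K d j = 0 := by
  funext i; simp only [ee]
  rw [if_neg]; · rfl
  · omega

lemma mulVec_ee (M : Matrix (Fin (d+1)) (Fin (d+1)) K) (j : ℕ) (hj : j ≤ d) :
    M *ᵥ ee K d j = fun i => M i ⟨j, by omega⟩ := by
  funext i
  simp only [Matrix.mulVec, dotProduct, ee]
  have : ∀ k : Fin (d+1), M i k * (if (k:ℕ) = j then 1 else 0)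
      = if k = ⟨j, by omega⟩ then M i k else 0 := by
    intro k; by_cases h : k = ⟨j, by omega⟩
    · subst h; simp
    · rw [if_neg h, if_neg, mul_zero]
      intro hk; exact h (Fin.ext hk)
  rw [Finset.sum_congr rfl (fun k _ => this k), Finset.sum_ite_eq']
  simp

lemma ee_eval (j : ℕ) (hj : j ≤ d) : ee K d j ⟨j, by omega⟩ = (1:K) := by
  simp [ee]

/-- matrices are determined by their action on the `ee`'s -/
lemma eq_zero_of_mulVec_ee (M : Matrix (Fin (d+1)) (Fin (d+1)) K)
    (h : ∀ j ≤ d, M *ᵥ ee K d j = 0) : M = 0 := by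
  ext i k
  have hk := h k (by omega)
  have := congrFun hk i
  rw [mulVec_ee M k (by omega)] at this
  simpa using this

lemma mulVec_inj {R : Matrix (Fin (d+1)) (Fin (d+1)) K} (hR : IsUnit R)
    {x y : Fin (d+1) → K} (h : R *ᵥ x = R *ᵥ y) : x = y := by
  have hdet : IsUnit R.det := (Matrix.isUnit_iff_isUnit_det R).mp hR
  have h1 : R⁻¹ * R = 1 := Matrix.nonsing_inv_mul R hdet
  calc x = (R⁻¹ * R) *ᵥ x := by rw [h1, Matrix.one_mulVec]
    _ = R⁻¹ *ᵥ (R *ᵥ x) := by rw [Matrix.mulVec_mulVec]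
    _ = R⁻¹ *ᵥ (R *ᵥ y) := by rw [h]
    _ = (R⁻¹ * R) *ᵥ y := by rw [Matrix.mulVec_mulVec]
    _ = y := by rw [h1, Matrix.one_mulVec]

/-- column relation for the lower bidiagonal matrix. -/
lemma lowerBidiag_mulVec_ee (μ : ℕ → K) (j : ℕ) (hj : j ≤ d) :
    lowerBidiag d μ *ᵥ ee K d j = μ j • ee K d j + ee K d (j+1) := by
  rw [mulVec_ee _ j hj]
  funext i
  simp only [lowerBidiag, Matrix.of_apply, Pi.add_apply, Pi.smul_apply, ee, smul_eq_mul]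
  split_ifs with h1 h2 h3 h4 h5 <;>
    first | (exfalso; omega) | (simp only [h1]; ring) | tauto | ring

/-- column relation for the upper bidiagonal matrix, at column `0`. -/
lemma upperBidiag_mulVec_ee0 (θs ψ : ℕ → K) :
    upperBidiag d θs ψ *ᵥ ee K d 0 = θs 0 • ee K d 0 := by
  rw [mulVec_ee _ 0 (by omega)]
  funext i
  simp only [upperBidiag, Matrix.of_apply, Pi.smul_apply, ee, smul_eq_mul]
  split_ifs with h1 h2 <;>
    first | (exfalso; omega) | (simp only [h1]; ring) | tauto | ring

/-- column relation for the upper bidiagonal matrix, columns `1,…,d`. -/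
lemma upperBidiag_mulVec_ee (θs ψ : ℕ → K) (j : ℕ) (hj1 : 1 ≤ j) (hj : j ≤ d) :
    upperBidiag d θs ψ *ᵥ ee K d j = θs j • ee K d j + ψ j • ee K d (j-1) := by
  rw [mulVec_ee _ j hj]
  funext i
  simp only [upperBidiag, Matrix.of_apply, Pi.add_apply, Pi.smul_apply, ee, smul_eq_mul]
  split_ifs with h1 h2 h3 h4 h5 <;>
    first | (exfalso; omega) | (simp only [h1]; ring) | tauto | ring



lemma sum_mulVec {ι : Type*} (s : Finset ι) (f : ι → Matrix (Fin (d+1)) (Fin (d+1)) K)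
    (v : Fin (d+1) → K) : (∑ i ∈ s, f i) *ᵥ v = ∑ i ∈ s, f i *ᵥ v := by
  induction s using Finset.cons_induction with
  | empty => simp
  | cons a s ha ih => simp [Finset.sum_cons, Matrix.add_mulVec, ih]

section LS
variable (Φ : LeonardSystem K d)

lemma Astar_eq : Φ.Astar = ∑ i ∈ Finset.range (d+1), Φ.thetastar i • Φ.Estar i := by
  calc Φ.Astar = Φ.Astar * 1 := by rw [mul_one]
    _ = ∑ i ∈ Finset.range (d+1), Φ.Astar * Φ.Estar i := by
        rw [← Φ.sumEstar, Finset.mul_sum]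
    _ = _ := Finset.sum_congr rfl
        (fun i hi => Φ.AstarEstar i (by have := Finset.mem_range.mp hi; omega))

lemma A_eq : Φ.A = ∑ i ∈ Finset.range (d+1), Φ.theta i • Φ.E i := by
  calc Φ.A = Φ.A * 1 := by rw [mul_one]
    _ = ∑ i ∈ Finset.range (d+1), Φ.A * Φ.E i := by
        rw [← Φ.sumE, Finset.mul_sum]
    _ = _ := Finset.sum_congr rfl
        (fun i hi => Φ.AE i (by have := Finset.mem_range.mp hi; omega))

lemma Estar_mul_Astar {ℓ : ℕ} (hℓ : ℓ ≤ d) :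
    Φ.Estar ℓ * Φ.Astar = Φ.thetastar ℓ • Φ.Estar ℓ := by
  rw [Astar_eq, Finset.mul_sum]
  have h : ∀ i ∈ Finset.range (d+1), Φ.Estar ℓ * (Φ.thetastar i • Φ.Estar i)
      = if ℓ = i then Φ.thetastar i • Φ.Estar ℓ else 0 := by
    intro i _
    rw [mul_smul_comm, Φ.EstarEstar]
    split_ifs <;> simp
  rw [Finset.sum_congr rfl h, Finset.sum_ite_eq, if_pos (Finset.mem_range.mpr (by omega))]

lemma E_mul_A {ℓ : ℕ} (hℓ : ℓ ≤ d) :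
    Φ.E ℓ * Φ.A = Φ.theta ℓ • Φ.E ℓ := by
  rw [A_eq, Finset.mul_sum]
  have h : ∀ i ∈ Finset.range (d+1), Φ.E ℓ * (Φ.theta i • Φ.E i)
      = if ℓ = i then Φ.theta i • Φ.E ℓ else 0 := by
    intro i _
    rw [mul_smul_comm, Φ.EE]
    split_ifs <;> simp
  rw [Finset.sum_congr rfl h, Finset.sum_ite_eq, if_pos (Finset.mem_range.mpr (by omega))]

lemma decompStar (v : Fin (d+1) → K) :
    ∑ ℓ ∈ Finset.range (d+1), Φ.Estar ℓ *ᵥ v = v := by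
  rw [← sum_mulVec, Φ.sumEstar, Matrix.one_mulVec]

lemma decompE (v : Fin (d+1) → K) :
    ∑ ℓ ∈ Finset.range (d+1), Φ.E ℓ *ᵥ v = v := by
  rw [← sum_mulVec, Φ.sumE, Matrix.one_mulVec]

lemma Estar_eigen {ℓ : ℕ} (hℓ : ℓ ≤ d) (v : Fin (d+1) → K) :
    Φ.Astar *ᵥ (Φ.Estar ℓ *ᵥ v) = Φ.thetastar ℓ • (Φ.Estar ℓ *ᵥ v) := by
  rw [Matrix.mulVec_mulVec, Φ.AstarEstar ℓ hℓ, Matrix.smul_mulVec]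

lemma E_eigen {ℓ : ℕ} (hℓ : ℓ ≤ d) (v : Fin (d+1) → K) :
    Φ.A *ᵥ (Φ.E ℓ *ᵥ v) = Φ.theta ℓ • (Φ.E ℓ *ᵥ v) := by
  rw [Matrix.mulVec_mulVec, Φ.AE ℓ hℓ, Matrix.smul_mulVec]

lemma Estar_kill {ℓ m : ℕ} (hℓ : ℓ ≤ d) (hm : m ≤ d) (hne : ℓ ≠ m)
    {v : Fin (d+1) → K} (hv : Φ.Astar *ᵥ v = Φ.thetastar m • v) :
    Φ.Estar ℓ *ᵥ v = 0 := by
  have h1 : Φ.thetastar ℓ • (Φ.Estar ℓ *ᵥ v) = Φ.thetastar m • (Φ.Estar ℓ *ᵥ v) := by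
    calc Φ.thetastar ℓ • (Φ.Estar ℓ *ᵥ v) = (Φ.thetastar ℓ • Φ.Estar ℓ) *ᵥ v := by
          rw [Matrix.smul_mulVec]
      _ = (Φ.Estar ℓ * Φ.Astar) *ᵥ v := by rw [Estar_mul_Astar Φ hℓ]
      _ = Φ.Estar ℓ *ᵥ (Φ.Astar *ᵥ v) := by rw [Matrix.mulVec_mulVec]
      _ = Φ.Estar ℓ *ᵥ (Φ.thetastar m • v) := by rw [hv]
      _ = Φ.thetastar m • (Φ.Estar ℓ *ᵥ v) := by rw [Matrix.mulVec_smul]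
  have h2 : (Φ.thetastar ℓ - Φ.thetastar m) • (Φ.Estar ℓ *ᵥ v) = 0 := by
    rw [sub_smul, h1, sub_self]
  rcases smul_eq_zero.mp h2 with h | h
  · exact absurd (Φ.thetastar_inj (Set.mem_Iic.mpr hℓ) (Set.mem_Iic.mpr hm)
      (sub_eq_zero.mp h)) hne
  · exact h

lemma E_kill {ℓ m : ℕ} (hℓ : ℓ ≤ d) (hm : m ≤ d) (hne : ℓ ≠ m)
    {v : Fin (d+1) → K} (hv : Φ.A *ᵥ v = Φ.theta m • v) :
    Φ.E ℓ *ᵥ v = 0 := by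
  have h1 : Φ.theta ℓ • (Φ.E ℓ *ᵥ v) = Φ.theta m • (Φ.E ℓ *ᵥ v) := by
    calc Φ.theta ℓ • (Φ.E ℓ *ᵥ v) = (Φ.theta ℓ • Φ.E ℓ) *ᵥ v := by
          rw [Matrix.smul_mulVec]
      _ = (Φ.E ℓ * Φ.A) *ᵥ v := by rw [E_mul_A Φ hℓ]
      _ = Φ.E ℓ *ᵥ (Φ.A *ᵥ v) := by rw [Matrix.mulVec_mulVec]
      _ = Φ.E ℓ *ᵥ (Φ.theta m • v) := by rw [hv]
      _ = Φ.theta m • (Φ.E ℓ *ᵥ v) := by rw [Matrix.mulVec_smul]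
  have h2 : (Φ.theta ℓ - Φ.theta m) • (Φ.E ℓ *ᵥ v) = 0 := by
    rw [sub_smul, h1, sub_self]
  rcases smul_eq_zero.mp h2 with h | h
  · exact absurd (Φ.theta_inj (Set.mem_Iic.mpr hℓ) (Set.mem_Iic.mpr hm)
      (sub_eq_zero.mp h)) hne
  · exact h

lemma E_fix {i : ℕ} (hi : i ≤ d) {v : Fin (d+1) → K}
    (hv : Φ.A *ᵥ v = Φ.theta i • v) : Φ.E i *ᵥ v = v := by
  conv_rhs => rw [← decompE Φ v]
  rw [Finset.sum_eq_single i]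
  · intro m _ hmne
    exact E_kill Φ (by { have := Finset.mem_range.mp ‹m ∈ Finset.range (d+1)›; omega }) hi hmne hv
  · intro h
    exact absurd (Finset.mem_range.mpr (by omega)) h

end LS

section Rows
variable (θs ψ μ : ℕ → K)

lemma ub_row (c : Fin (d+1) → K) (i : Fin (d+1)) :
    (upperBidiag d θs ψ *ᵥ c) i = θs (i:ℕ) * c i +
      (if h : (i:ℕ) < d then ψ ((i:ℕ)+1) * c ⟨(i:ℕ)+1, by omega⟩ else 0) := by
  simp only [Matrix.mulVec, dotProduct, upperBidiag, Matrix.of_apply]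
  by_cases h : (i:ℕ) < d
  · rw [dif_pos h]
    have key : ∀ k : Fin (d+1),
        (if (i:ℕ) = (k:ℕ) then θs (i:ℕ) else if (i:ℕ)+1 = (k:ℕ) then ψ (k:ℕ) else 0) * c k
        = (if k = i then θs (i:ℕ) * c k else 0)
          + (if k = (⟨(i:ℕ)+1, by omega⟩ : Fin (d+1)) then ψ ((i:ℕ)+1) * c k else 0) := by
      intro k
      simp only [Fin.ext_iff]
      split_ifs <;>
        first | (exfalso; omega) | ring1 | (rename_i hh; rw [hh]; ring1) |
          (rename_i hh; rw [← hh]; ring1) | (rename_i h1 hh; rw [hh]; ring1) |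
          (rename_i h1 hh; rw [← hh]; ring1)
    rw [Finset.sum_congr rfl (fun k _ => key k), Finset.sum_add_distrib,
      Finset.sum_ite_eq', Finset.sum_ite_eq', if_pos (Finset.mem_univ _),
      if_pos (Finset.mem_univ _)]
  · rw [dif_neg h]
    have key : ∀ k : Fin (d+1),
        (if (i:ℕ) = (k:ℕ) then θs (i:ℕ) else if (i:ℕ)+1 = (k:ℕ) then ψ (k:ℕ) else 0) * c k
        = (if k = i then θs (i:ℕ) * c k else 0) := by
      intro k
      have hk := k.isLt
      simp only [Fin.ext_iff]
      split_ifs <;> first | (exfalso; omega) | ring1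
    rw [Finset.sum_congr rfl (fun k _ => key k), Finset.sum_ite_eq',
      if_pos (Finset.mem_univ _), add_zero]

lemma lb_row (c : Fin (d+1) → K) (i : Fin (d+1)) :
    (lowerBidiag d μ *ᵥ c) i = μ (i:ℕ) * c i +
      (if h : 0 < (i:ℕ) then c ⟨(i:ℕ)-1, by omega⟩ else 0) := by
  simp only [Matrix.mulVec, dotProduct, lowerBidiag, Matrix.of_apply]
  by_cases h : 0 < (i:ℕ)
  · rw [dif_pos h]
    have key : ∀ k : Fin (d+1),
        (if (i:ℕ) = (k:ℕ) then μ (i:ℕ) else if (k:ℕ)+1 = (i:ℕ) then 1 else 0) * c k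
        = (if k = i then μ (i:ℕ) * c k else 0)
          + (if k = (⟨(i:ℕ)-1, by omega⟩ : Fin (d+1)) then c k else 0) := by
      intro k
      simp only [Fin.ext_iff]
      split_ifs <;>
        first | (exfalso; omega) | ring1 | (rename_i hh; rw [hh]; ring1) |
          (rename_i hh; rw [← hh]; ring1) | (rename_i h1 hh; rw [hh]; ring1) |
          (rename_i h1 hh; rw [← hh]; ring1)
    rw [Finset.sum_congr rfl (fun k _ => key k), Finset.sum_add_distrib,
      Finset.sum_ite_eq', Finset.sum_ite_eq', if_pos (Finset.mem_univ _),
      if_pos (Finset.mem_univ _)]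
  · rw [dif_neg h]
    have key : ∀ k : Fin (d+1),
        (if (i:ℕ) = (k:ℕ) then μ (i:ℕ) else if (k:ℕ)+1 = (i:ℕ) then 1 else 0) * c k
        = (if k = i then μ (i:ℕ) * c k else 0) := by
      intro k
      simp only [Fin.ext_iff]
      split_ifs <;> first | (exfalso; omega) | ring1
    rw [Finset.sum_congr rfl (fun k _ => key k), Finset.sum_ite_eq',
      if_pos (Finset.mem_univ _), add_zero]

lemma ub_unique (hinj : Set.InjOn θs (Set.Iic d)) {ℓ : ℕ} (hℓ : ℓ ≤ d)
    {c : Fin (d+1) → K} (hc : upperBidiag d θs ψ *ᵥ c = θs ℓ • c)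
    (h0 : c ⟨ℓ, by omega⟩ = 0) : c = 0 := by
  have key : ∀ m : ℕ, ∀ i : Fin (d+1), d - (i:ℕ) = m → c i = 0 := by
    intro m
    induction m using Nat.strong_induction_on with
    | _ m ih =>
      intro i him
      by_cases hiℓ : (i:ℕ) = ℓ
      · have hi : i = ⟨ℓ, by omega⟩ := Fin.ext hiℓ
        rw [hi]; exact h0
      · have hrow := congrFun hc i
        rw [ub_row] at hrow
        simp only [Pi.smul_apply, smul_eq_mul] at hrow
        have hne : θs (i:ℕ) - θs ℓ ≠ 0 := by
          intro hcon
          exact hiℓ (hinj (Set.mem_Iic.mpr (by omega)) (Set.mem_Iic.mpr hℓ)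
            (sub_eq_zero.mp hcon))
        by_cases hid : (i:ℕ) < d
        · have hnext : c ⟨(i:ℕ)+1, by omega⟩ = 0 :=
            ih (d - ((i:ℕ)+1)) (by omega) ⟨(i:ℕ)+1, by omega⟩ rfl
          rw [dif_pos hid, hnext, mul_zero, add_zero] at hrow
          have : (θs (i:ℕ) - θs ℓ) * c i = 0 := by rw [sub_mul, hrow, sub_self]
          exact (mul_eq_zero.mp this).resolve_left hne
        · rw [dif_neg hid, add_zero] at hrow
          have : (θs (i:ℕ) - θs ℓ) * c i = 0 := by rw [sub_mul, hrow, sub_self]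
          exact (mul_eq_zero.mp this).resolve_left hne
  funext i
  exact key (d - (i:ℕ)) i rfl

lemma ub_dep (hinj : Set.InjOn θs (Set.Iic d)) {ℓ : ℕ} (hℓ : ℓ ≤ d)
    {c c' : Fin (d+1) → K} (hc : upperBidiag d θs ψ *ᵥ c = θs ℓ • c)
    (hc' : upperBidiag d θs ψ *ᵥ c' = θs ℓ • c')
    (h0 : c' ⟨ℓ, by omega⟩ ≠ 0) : ∃ t : K, c = t • c' := by
  set t : K := c ⟨ℓ, by omega⟩ / c' ⟨ℓ, by omega⟩ with ht
  refine ⟨t, ?_⟩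
  have hsol : upperBidiag d θs ψ *ᵥ (c - t • c') = θs ℓ • (c - t • c') := by
    rw [Matrix.mulVec_sub, Matrix.mulVec_smul, hc, hc', smul_sub, smul_comm]
  have hz : (c - t • c') ⟨ℓ, by omega⟩ = 0 := by
    simp only [Pi.sub_apply, Pi.smul_apply, smul_eq_mul, ht]
    field_simp
    simp
  have := ub_unique θs ψ hinj hℓ hsol hz
  have := sub_eq_zero.mp (by rw [this]  : c - t • c' = 0)
  exact this

lemma lb_kernel (hinj : Set.InjOn μ (Set.Iic d))
    {c : Fin (d+1) → K} (hc : lowerBidiag d μ *ᵥ c = μ d • c) :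
    ∀ i : Fin (d+1), (i:ℕ) ≠ d → c i = 0 := by
  have key : ∀ m : ℕ, ∀ i : Fin (d+1), (i:ℕ) = m → (i:ℕ) ≠ d → c i = 0 := by
    intro m
    induction m using Nat.strong_induction_on with
    | _ m ih =>
      intro i him hid
      have hrow := congrFun hc i
      rw [lb_row] at hrow
      simp only [Pi.smul_apply, smul_eq_mul] at hrow
      have hne : μ (i:ℕ) - μ d ≠ 0 := by
        intro hcon
        exact hid (hinj (Set.mem_Iic.mpr (by omega)) (Set.mem_Iic.mpr (le_refl d))
          (sub_eq_zero.mp hcon))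
      by_cases h0 : 0 < (i:ℕ)
      · have hprev : c ⟨(i:ℕ)-1, by omega⟩ = 0 :=
          ih ((i:ℕ)-1) (by omega) ⟨(i:ℕ)-1, by omega⟩ rfl (show ((i:ℕ)-1 ≠ d) by have := i.isLt; omega)
        rw [dif_pos h0, hprev, add_zero] at hrow
        have : (μ (i:ℕ) - μ d) * c i = 0 := by rw [sub_mul, hrow, sub_self]
        exact (mul_eq_zero.mp this).resolve_left hne
      · rw [dif_neg h0, add_zero] at hrow
        have : (μ (i:ℕ) - μ d) * c i = 0 := by rw [sub_mul, hrow, sub_self]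
        exact (mul_eq_zero.mp this).resolve_left hne
  exact fun i => key (i:ℕ) i rfl

end Rows

/-- the `j`-th column of `R` (zero for `j > d`). -/
def rcol (R : Matrix (Fin (d+1)) (Fin (d+1)) K) (j : ℕ) : Fin (d+1) → K :=
  R *ᵥ ee K d j

section SplitForm
variable (Φ : LeonardSystem K d) (R : Matrix (Fin (d+1)) (Fin (d+1)) K) (μ ψ : ℕ → K)

lemma rcol_top {j : ℕ} (hj : d < j) : rcol R j = 0 := by
  rw [rcol, ee_top j hj, Matrix.mulVec_zero]

lemma rcol_ne (hR : IsUnit R) {j : ℕ} (hj : j ≤ d) : rcol R j ≠ 0 := by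
  intro h
  have h2 : ee K d j = (0 : Fin (d+1) → K) :=
    mulVec_inj hR (by rw [Matrix.mulVec_zero]; exact h)
  have := congrFun h2 ⟨j, by omega⟩
  rw [ee_eval j hj] at this
  simpa using this

lemma exists_coord (hR : IsUnit R) (v : Fin (d+1) → K) : ∃ c, v = R *ᵥ c := by
  refine ⟨R⁻¹ *ᵥ v, ?_⟩
  rw [Matrix.mulVec_mulVec, Matrix.mul_nonsing_inv R ((Matrix.isUnit_iff_isUnit_det R).mp hR),
    Matrix.one_mulVec]

lemma colA (hAR : Φ.A * R = R * lowerBidiag d μ) {j : ℕ} (hj : j ≤ d) :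
    Φ.A *ᵥ rcol R j = μ j • rcol R j + rcol R (j+1) := by
  rw [rcol, Matrix.mulVec_mulVec, hAR, ← Matrix.mulVec_mulVec,
    lowerBidiag_mulVec_ee μ j hj, Matrix.mulVec_add, Matrix.mulVec_smul]
  rfl

lemma colB (hBR : Φ.Astar * R = R * upperBidiag d Φ.thetastar ψ)
    {j : ℕ} (hj1 : 1 ≤ j) (hj : j ≤ d) :
    Φ.Astar *ᵥ rcol R j = Φ.thetastar j • rcol R j + ψ j • rcol R (j-1) := by
  rw [rcol, Matrix.mulVec_mulVec, hBR, ← Matrix.mulVec_mulVec,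
    upperBidiag_mulVec_ee Φ.thetastar ψ j hj1 hj, Matrix.mulVec_add,
    Matrix.mulVec_smul, Matrix.mulVec_smul]
  rfl

lemma colB0 (hBR : Φ.Astar * R = R * upperBidiag d Φ.thetastar ψ) :
    Φ.Astar *ᵥ rcol R 0 = Φ.thetastar 0 • rcol R 0 := by
  rw [rcol, Matrix.mulVec_mulVec, hBR, ← Matrix.mulVec_mulVec,
    upperBidiag_mulVec_ee0 Φ.thetastar ψ, Matrix.mulVec_smul]

/-- eigenvector coordinate transfer to the upper bidiagonal matrix -/
lemma coord_eigen (hR : IsUnit R) (hBR : Φ.Astar * R = R * upperBidiag d Φ.thetastar ψ)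
    {t : K} {c : Fin (d+1) → K} (h : Φ.Astar *ᵥ (R *ᵥ c) = t • (R *ᵥ c)) :
    upperBidiag d Φ.thetastar ψ *ᵥ c = t • c := by
  apply mulVec_inj hR
  rw [Matrix.mulVec_mulVec, ← hBR, ← Matrix.mulVec_mulVec, h, Matrix.mulVec_smul]

lemma coord_eigenA (hR : IsUnit R) (hAR : Φ.A * R = R * lowerBidiag d μ)
    {t : K} {c : Fin (d+1) → K} (h : Φ.A *ᵥ (R *ᵥ c) = t • (R *ᵥ c)) :
    lowerBidiag d μ *ᵥ c = t • c := by
  apply mulVec_inj hR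
  rw [Matrix.mulVec_mulVec, ← hAR, ← Matrix.mulVec_mulVec, h, Matrix.mulVec_smul]

/-- any two eigenvectors of `A*` for the eigenvalue `θ*_ℓ` are proportional. -/
lemma eigvec_dep (hR : IsUnit R) (hBR : Φ.Astar * R = R * upperBidiag d Φ.thetastar ψ)
    {ℓ : ℕ} (hℓ : ℓ ≤ d) {u v : Fin (d+1) → K}
    (hu : Φ.Astar *ᵥ u = Φ.thetastar ℓ • u) (hv : Φ.Astar *ᵥ v = Φ.thetastar ℓ • v)
    (hu0 : u ≠ 0) : ∃ t : K, v = t • u := by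
  obtain ⟨cu, hcu⟩ := exists_coord R hR u
  obtain ⟨cv, hcv⟩ := exists_coord R hR v
  have hcu' : upperBidiag d Φ.thetastar ψ *ᵥ cu = Φ.thetastar ℓ • cu :=
    coord_eigen Φ R ψ hR hBR (by rw [← hcu]; exact hu)
  have hcv' : upperBidiag d Φ.thetastar ψ *ᵥ cv = Φ.thetastar ℓ • cv :=
    coord_eigen Φ R ψ hR hBR (by rw [← hcv]; exact hv)
  have hcu0 : cu ⟨ℓ, by omega⟩ ≠ 0 := by
    intro hzero
    exact hu0 (by rw [hcu, ub_unique Φ.thetastar ψ Φ.thetastar_inj hℓ hcu' hzero,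
      Matrix.mulVec_zero])
  obtain ⟨t, ht⟩ := ub_dep Φ.thetastar ψ Φ.thetastar_inj hℓ hcv' hcu' hcu0
  exact ⟨t, by rw [hcv, ht, Matrix.mulVec_smul, ← hcu]⟩

/-- eigenvectors of `A` for the last diagonal entry `μ d` are multiples of the last column. -/
lemma lb_span (hR : IsUnit R) (hAR : Φ.A * R = R * lowerBidiag d μ)
    (hinj : Set.InjOn μ (Set.Iic d)) {v : Fin (d+1) → K}
    (hv : Φ.A *ᵥ v = μ d • v) : ∃ t : K, v = t • rcol R d := by
  obtain ⟨c, hc⟩ := exists_coord R hR v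
  have hc' : lowerBidiag d μ *ᵥ c = μ d • c :=
    coord_eigenA Φ R μ hR hAR (by rw [← hc]; exact hv)
  have hker := lb_kernel μ hinj hc'
  refine ⟨c ⟨d, by omega⟩, ?_⟩
  have hcc : c = c ⟨d, by omega⟩ • ee K d d := by
    funext i
    by_cases hi : (i:ℕ) = d
    · have : i = ⟨d, by omega⟩ := Fin.ext hi
      rw [this]
      simp [ee]
    · rw [hker i hi]
      simp [ee, hi]
  conv_lhs => rw [hc, hcc]
  rw [Matrix.mulVec_smul]
  rfl

end SplitForm

section Components
variable (Φ : LeonardSystem K d) (R : Matrix (Fin (d+1)) (Fin (d+1)) K) (μ ψ : ℕ → K)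

lemma w_zero0 (hBR : Φ.Astar * R = R * upperBidiag d Φ.thetastar ψ)
    {ℓ : ℕ} (hℓ1 : 1 ≤ ℓ) (hℓ : ℓ ≤ d) : Φ.Estar ℓ *ᵥ rcol R 0 = 0 :=
  Estar_kill Φ hℓ (Nat.zero_le d) (by omega) (colB0 Φ R ψ hBR)

lemma w_rec (hBR : Φ.Astar * R = R * upperBidiag d Φ.thetastar ψ)
    {ℓ : ℕ} (hℓ : ℓ ≤ d) {j : ℕ} (hj1 : 1 ≤ j) (hj : j ≤ d) :
    (Φ.thetastar ℓ - Φ.thetastar j) • (Φ.Estar ℓ *ᵥ rcol R j)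
      = ψ j • (Φ.Estar ℓ *ᵥ rcol R (j-1)) := by
  have h1 : Φ.Estar ℓ *ᵥ (Φ.Astar *ᵥ rcol R j) = Φ.thetastar ℓ • (Φ.Estar ℓ *ᵥ rcol R j) := by
    rw [Matrix.mulVec_mulVec, Estar_mul_Astar Φ hℓ, Matrix.smul_mulVec]
  have h2 : Φ.Estar ℓ *ᵥ (Φ.Astar *ᵥ rcol R j)
      = Φ.thetastar j • (Φ.Estar ℓ *ᵥ rcol R j) + ψ j • (Φ.Estar ℓ *ᵥ rcol R (j-1)) := by
    rw [colB Φ R ψ hBR hj1 hj, Matrix.mulVec_add, Matrix.mulVec_smul, Matrix.mulVec_smul]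
  have h3 := h1.symm.trans h2
  rw [sub_smul, h3]
  abel

lemma w_step (hBR : Φ.Astar * R = R * upperBidiag d Φ.thetastar ψ)
    {ℓ : ℕ} (hℓ : ℓ ≤ d) {j : ℕ} (hne : j ≠ ℓ) (hj1 : 1 ≤ j) (hj : j ≤ d) :
    Φ.Estar ℓ *ᵥ rcol R j
      = (ψ j / (Φ.thetastar ℓ - Φ.thetastar j)) • (Φ.Estar ℓ *ᵥ rcol R (j-1)) := by
  have hΔ : Φ.thetastar ℓ - Φ.thetastar j ≠ 0 := by
    intro hcon
    exact hne (Φ.thetastar_inj (Set.mem_Iic.mpr hj) (Set.mem_Iic.mpr hℓ)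
      (sub_eq_zero.mp hcon).symm)
  have hr := w_rec Φ R ψ hBR hℓ hj1 hj
  calc Φ.Estar ℓ *ᵥ rcol R j
      = (Φ.thetastar ℓ - Φ.thetastar j)⁻¹ •
          ((Φ.thetastar ℓ - Φ.thetastar j) • (Φ.Estar ℓ *ᵥ rcol R j)) := by
        rw [smul_smul, inv_mul_cancel₀ hΔ, one_smul]
    _ = (Φ.thetastar ℓ - Φ.thetastar j)⁻¹ • (ψ j • (Φ.Estar ℓ *ᵥ rcol R (j-1))) := by rw [hr]
    _ = (ψ j / (Φ.thetastar ℓ - Φ.thetastar j)) • (Φ.Estar ℓ *ᵥ rcol R (j-1)) := by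
        rw [smul_smul, div_eq_inv_mul]

lemma w_upper (hBR : Φ.Astar * R = R * upperBidiag d Φ.thetastar ψ)
    {ℓ : ℕ} (hℓ : ℓ ≤ d) {j : ℕ} (hj : j < ℓ) : Φ.Estar ℓ *ᵥ rcol R j = 0 := by
  induction j with
  | zero => exact w_zero0 Φ R ψ hBR (by omega) hℓ
  | succ n ih =>
    rw [w_step Φ R ψ hBR hℓ (show n+1 ≠ ℓ by omega) (by omega) (by omega),
      show n+1-1 = n from rfl, ih (by omega), smul_zero]

lemma w_chain_zero (hBR : Φ.Astar * R = R * upperBidiag d Φ.thetastar ψ)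
    {ℓ : ℕ} (hℓ : ℓ ≤ d) (h0 : Φ.Estar ℓ *ᵥ rcol R ℓ = 0) :
    ∀ j, j ≤ d → Φ.Estar ℓ *ᵥ rcol R j = 0 := by
  intro j
  induction j with
  | zero =>
    intro _
    rcases Nat.eq_zero_or_pos ℓ with h | h
    · rw [← h]; exact h0
    · exact w_zero0 Φ R ψ hBR h hℓ
  | succ n ih =>
    intro hn1
    rcases lt_trichotomy (n+1) ℓ with h | h | h
    · exact w_upper Φ R ψ hBR hℓ h
    · rw [h]; exact h0
    · rw [w_step Φ R ψ hBR hℓ (by omega) (by omega) hn1,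
        show n+1-1 = n from rfl, ih (by omega), smul_zero]

lemma w_diag_ne (hR : IsUnit R) (hBR : Φ.Astar * R = R * upperBidiag d Φ.thetastar ψ)
    {ℓ : ℕ} (hℓ : ℓ ≤ d) : Φ.Estar ℓ *ᵥ rcol R ℓ ≠ 0 := by
  intro h0
  have hzero : Φ.Estar ℓ * R = 0 := by
    apply eq_zero_of_mulVec_ee
    intro j hj
    rw [← Matrix.mulVec_mulVec]
    exact w_chain_zero Φ R ψ hBR hℓ h0 j hj
  have hE : Φ.Estar ℓ = 0 := by
    calc Φ.Estar ℓ = Φ.Estar ℓ * (R * R⁻¹) := by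
          rw [Matrix.mul_nonsing_inv R ((Matrix.isUnit_iff_isUnit_det R).mp hR), mul_one]
      _ = (Φ.Estar ℓ * R) * R⁻¹ := by rw [mul_assoc]
      _ = 0 := by rw [hzero, zero_mul]
  exact Φ.Estar_ne ℓ hℓ hE

lemma psi_ne (hR : IsUnit R) (hAR : Φ.A * R = R * lowerBidiag d μ)
    (hBR : Φ.Astar * R = R * upperBidiag d Φ.thetastar ψ) :
    ∀ j, 1 ≤ j → j ≤ d → ψ j ≠ 0 := by
  intro j hj1 hj hψ0
  have ha : ∀ ℓ, ℓ ≤ d → ℓ ≠ j → Φ.Estar ℓ *ᵥ rcol R j = 0 := by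
    intro ℓ hℓ hne
    rw [w_step Φ R ψ hBR hℓ (fun h => hne h.symm) hj1 hj, hψ0, zero_div, zero_smul]
  have hb : Φ.Estar j *ᵥ rcol R j = rcol R j := by
    conv_rhs => rw [← decompStar Φ (rcol R j)]
    rw [Finset.sum_eq_single j]
    · intro m hm hmne
      exact ha m (by have := Finset.mem_range.mp hm; omega) hmne
    · intro h
      exact absurd (Finset.mem_range.mpr (by omega)) h
  have hceig : Φ.Astar *ᵥ rcol R j = Φ.thetastar j • rcol R j := by
    conv_lhs => rw [← hb]
    conv_rhs => rw [← hb]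
    exact Estar_eigen Φ hj _
  have hd : Φ.Estar (j-1) * Φ.A * Φ.Estar j = 0 := by
    apply eq_zero_of_mulVec_ee
    intro k hk
    rw [← Matrix.mulVec_mulVec, ← Matrix.mulVec_mulVec]
    have hvec := Estar_eigen Φ hj (ee K d k)
    obtain ⟨t, ht⟩ := eigvec_dep Φ R ψ hR hBR hj hceig hvec (rcol_ne R hR hj)
    rw [ht, Matrix.mulVec_smul, colA Φ R μ hAR hj, smul_add, Matrix.mulVec_add,
      Matrix.mulVec_smul, Matrix.mulVec_smul, Matrix.mulVec_smul]
    have hz1 : Φ.Estar (j-1) *ᵥ rcol R j = 0 := ha (j-1) (by omega) (by omega)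
    have hz2 : Φ.Estar (j-1) *ᵥ rcol R (j+1) = 0 := by
      rcases Nat.lt_or_ge j d with h | h
      · rw [w_step Φ R ψ hBR (by omega) (by omega) (by omega) (by omega),
          show j+1-1 = j from rfl, hz1, smul_zero]
      · have : d < j+1 := by omega
        rw [rcol_top R this, Matrix.mulVec_zero]
    rw [hz1, hz2]
    simp
  exact Φ.trid_near (j-1) j (by omega) hj (Or.inl (by omega)) hd

lemma w_prod (hBR : Φ.Astar * R = R * upperBidiag d Φ.thetastar ψ)
    {ℓ : ℕ} (hℓ : ℓ ≤ d) {m : ℕ} (hℓm : ℓ ≤ m) :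
    m ≤ d → Φ.Estar ℓ *ᵥ rcol R m
      = (∏ j ∈ Finset.Ioc ℓ m, (ψ j / (Φ.thetastar ℓ - Φ.thetastar j))) •
          (Φ.Estar ℓ *ᵥ rcol R ℓ) := by
  induction m, hℓm using Nat.le_induction with
  | base => intro _; simp
  | succ n hℓn ih =>
    intro hn1
    rw [w_step Φ R ψ hBR hℓ (by omega) (by omega) hn1, show n+1-1 = n from rfl,
      ih (by omega), smul_smul, Finset.prod_Ioc_succ_top hℓn, mul_comm]

end Components

lemma mulVec_sumv {ι : Type*} (s : Finset ι) (M : Matrix (Fin (d+1)) (Fin (d+1)) K)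
    (v : ι → Fin (d+1) → K) : M *ᵥ (∑ i ∈ s, v i) = ∑ i ∈ s, M *ᵥ v i := by
  induction s using Finset.cons_induction with
  | empty => simp
  | cons a s ha ih => simp [Finset.sum_cons, Matrix.mulVec_add, ih]

section Cross
variable (Φ : LeonardSystem K d) (P Q : Matrix (Fin (d+1)) (Fin (d+1)) K)
  (φ ϕ : ℕ → K) (s : K)

lemma cross
    (hAP : Φ.A * P = P * lowerBidiag d Φ.theta)
    (hBP : Φ.Astar * P = P * upperBidiag d Φ.thetastar φ)
    (hAQ : Φ.A * Q = Q * lowerBidiag d (fun i => Φ.theta (d - i)))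
    (hBQ : Φ.Astar * Q = Q * upperBidiag d Φ.thetastar ϕ)
    (hs : rcol Q 0 = s • rcol P 0) :
    ∀ j, j ≤ d → ∀ ℓ, j ≤ ℓ → ℓ ≤ d →
      Φ.Estar ℓ *ᵥ rcol Q j = s • (Φ.Estar ℓ *ᵥ rcol P j) := by
  intro j
  induction j with
  | zero =>
    intro _ ℓ _ _
    rw [hs, Matrix.mulVec_smul]
  | succ n ih =>
    intro hn1 ℓ hℓ1 hℓd
    have hQA := colA Φ Q (fun i => Φ.theta (d - i)) hAQ (show n ≤ d by omega)
    have hPA := colA Φ P Φ.theta hAP (show n ≤ d by omega)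
    have hq : rcol Q (n+1) = Φ.A *ᵥ rcol Q n - Φ.theta (d-n) • rcol Q n := by
      rw [hQA]; abel
    have hp : rcol P (n+1) = Φ.A *ᵥ rcol P n - Φ.theta n • rcol P n := by
      rw [hPA]; abel
    have hwQ : Φ.Estar ℓ *ᵥ rcol Q n = 0 := w_upper Φ Q ϕ hBQ hℓd (by omega)
    have hwP : Φ.Estar ℓ *ᵥ rcol P n = 0 := w_upper Φ P φ hBP hℓd (by omega)
    have key : Φ.Estar ℓ *ᵥ (Φ.A *ᵥ (rcol Q n - s • rcol P n)) = 0 := by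
      set δ := rcol Q n - s • rcol P n with hδ
      have hδdec : δ = ∑ m ∈ Finset.range (d+1), Φ.Estar m *ᵥ δ := (decompStar Φ δ).symm
      rw [hδdec, mulVec_sumv, mulVec_sumv]
      apply Finset.sum_eq_zero
      intro m hm
      have hmd : m ≤ d := by have := Finset.mem_range.mp hm; omega
      rcases Nat.lt_or_ge m n with h | h
      · rw [Matrix.mulVec_mulVec, Matrix.mulVec_mulVec,
          Φ.trid_far ℓ m hℓd hmd (Or.inr (by omega)), Matrix.zero_mulVec]
      · have hz : Φ.Estar m *ᵥ δ = 0 := by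
          rw [hδ, Matrix.mulVec_sub, Matrix.mulVec_smul, ih (by omega) m h hmd, sub_self]
        rw [hz, Matrix.mulVec_zero, Matrix.mulVec_zero]
    have key2 : Φ.Estar ℓ *ᵥ (Φ.A *ᵥ rcol Q n) = s • (Φ.Estar ℓ *ᵥ (Φ.A *ᵥ rcol P n)) := by
      have expand : Φ.A *ᵥ (rcol Q n - s • rcol P n)
          = Φ.A *ᵥ rcol Q n - s • (Φ.A *ᵥ rcol P n) := by
        rw [Matrix.mulVec_sub, Matrix.mulVec_smul]
      rw [expand, Matrix.mulVec_sub, Matrix.mulVec_smul] at key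
      exact sub_eq_zero.mp key
    rw [hq, hp, Matrix.mulVec_sub, Matrix.mulVec_sub, Matrix.mulVec_smul, Matrix.mulVec_smul,
      hwQ, hwP, key2]
    simp

end Cross

lemma prod_shift (f : ℕ → K) (ℓ : ℕ) :
    ∏ m ∈ Finset.range ℓ, f (m+1) = ∏ j ∈ Finset.Ioc 0 ℓ, f j := by
  induction ℓ with
  | zero => simp
  | succ n ih => rw [Finset.prod_range_succ, ih, Finset.prod_Ioc_succ_top (Nat.zero_le n)]

end Stmt13Aux


open Stmt13Aux in
/-- The dual switching element `S* = ∑_ℓ (ϕ_1⋯ϕ_ℓ)/(φ_1⋯φ_ℓ) E_ℓ*` of a Leonard system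
`Φ` with parameter array `({θ_i}; {θ_i*}; {φ_i}; {ϕ_i})` satisfies `S* E_0 V = E_d V`. -/
theorem stmt_13 {K : Type*} [Field K] {d : ℕ} (Φ : LeonardSystem K d)
    (φ ϕ : ℕ → K) (hpa : HasParameterArray Φ φ ϕ) :
    Submodule.map
      (Matrix.mulVecLin (∑ ℓ ∈ Finset.range (d+1),
        ((∏ m ∈ Finset.range ℓ, ϕ (m+1)) / (∏ m ∈ Finset.range ℓ, φ (m+1))) • Φ.Estar ℓ))
      (LinearMap.range (Φ.E 0).mulVecLin) = LinearMap.range (Φ.E d).mulVecLin := by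

  obtain ⟨⟨P, hP, hAP, hBP⟩, ⟨Q, hQ, hAQ, hBQ⟩⟩ := hpa
  obtain ⟨s, hs⟩ := eigvec_dep Φ P φ hP hBP (Nat.zero_le d) (colB0 Φ P φ hBP)
      (colB0 Φ Q ϕ hBQ) (rcol_ne P hP (Nat.zero_le d))
  have hs0 : s ≠ 0 := fun h => rcol_ne Q hQ (Nat.zero_le d) (by rw [hs, h, zero_smul])
  have hμinj : Set.InjOn (fun i => Φ.theta (d - i)) (Set.Iic d) := by
    intro a ha b hb hab
    have ha2 := Set.mem_Iic.mp ha
    have hb2 := Set.mem_Iic.mp hb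
    have := Φ.theta_inj (Set.mem_Iic.mpr (show d - a ≤ d by omega))
      (Set.mem_Iic.mpr (show d - b ≤ d by omega)) hab
    omega
  have hφ : ∀ j, 1 ≤ j → j ≤ d → φ j ≠ 0 := psi_ne Φ P Φ.theta φ hP hAP hBP
  have hϕ : ∀ j, 1 ≤ j → j ≤ d → ϕ j ≠ 0 :=
    psi_ne Φ Q (fun i => Φ.theta (d - i)) ϕ hQ hAQ hBQ
  have hΔ : ∀ ℓ, ℓ ≤ d → ∀ j ∈ Finset.Ioc ℓ d, Φ.thetastar ℓ - Φ.thetastar j ≠ 0 := by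
    intro ℓ hℓ j hj hcon
    have hj' := Finset.mem_Ioc.mp hj
    exact absurd (Φ.thetastar_inj (Set.mem_Iic.mpr hℓ) (Set.mem_Iic.mpr hj'.2)
      (sub_eq_zero.mp hcon)) (by omega)
  set C : K := s * (∏ m ∈ Finset.range d, ϕ (m+1)) / (∏ m ∈ Finset.range d, φ (m+1)) with hC
  have hprodϕ : (∏ m ∈ Finset.range d, ϕ (m+1)) ≠ 0 := by
    rw [prod_shift]
    exact Finset.prod_ne_zero_iff.mpr
      (fun j hj => hϕ j (Finset.mem_Ioc.mp hj).1 (Finset.mem_Ioc.mp hj).2)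
  have hprodφ : (∏ m ∈ Finset.range d, φ (m+1)) ≠ 0 := by
    rw [prod_shift]
    exact Finset.prod_ne_zero_iff.mpr
      (fun j hj => hφ j (Finset.mem_Ioc.mp hj).1 (Finset.mem_Ioc.mp hj).2)
  have hC0 : C ≠ 0 := div_ne_zero (mul_ne_zero hs0 hprodϕ) hprodφ
  -- the master computation : S* q_d = C p_d
  have hSq : (∑ ℓ ∈ Finset.range (d+1),
        ((∏ m ∈ Finset.range ℓ, ϕ (m+1)) / (∏ m ∈ Finset.range ℓ, φ (m+1))) • Φ.Estar ℓ)
        *ᵥ rcol Q d = C • rcol P d := by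
    rw [Stmt13Aux.sum_mulVec]
    have hterm : ∀ ℓ ∈ Finset.range (d+1),
        (((∏ m ∈ Finset.range ℓ, ϕ (m+1)) / (∏ m ∈ Finset.range ℓ, φ (m+1))) • Φ.Estar ℓ)
          *ᵥ rcol Q d = C • (Φ.Estar ℓ *ᵥ rcol P d) := by
      intro ℓ hℓr
      have hℓ : ℓ ≤ d := by have := Finset.mem_range.mp hℓr; omega
      rw [Matrix.smul_mulVec, w_prod Φ Q ϕ hBQ hℓ hℓ (le_refl d),
        cross Φ P Q φ ϕ s hAP hBP hAQ hBQ hs ℓ hℓ ℓ (le_refl ℓ) hℓ,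
        w_prod Φ P φ hBP hℓ hℓ (le_refl d), smul_smul, smul_smul, smul_smul]
      congr 1
      rw [prod_shift ϕ ℓ, prod_shift φ ℓ, hC, prod_shift ϕ d, prod_shift φ d,
        Finset.prod_div_distrib, Finset.prod_div_distrib,
        ← Finset.prod_Ioc_consecutive ϕ (Nat.zero_le ℓ) hℓ,
        ← Finset.prod_Ioc_consecutive φ (Nat.zero_le ℓ) hℓ]
      have h1 : (∏ j ∈ Finset.Ioc 0 ℓ, φ j) ≠ 0 :=
        Finset.prod_ne_zero_iff.mpr (fun j hj =>
          hφ j (Finset.mem_Ioc.mp hj).1 (le_trans (Finset.mem_Ioc.mp hj).2 hℓ))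
      have h2 : (∏ j ∈ Finset.Ioc ℓ d, φ j) ≠ 0 :=
        Finset.prod_ne_zero_iff.mpr (fun j hj =>
          hφ j (by have := (Finset.mem_Ioc.mp hj).1; omega) (Finset.mem_Ioc.mp hj).2)
      have h3 : (∏ j ∈ Finset.Ioc ℓ d, (Φ.thetastar ℓ - Φ.thetastar j)) ≠ 0 :=
        Finset.prod_ne_zero_iff.mpr (fun j hj => hΔ ℓ hℓ j hj)
      field_simp
    rw [Finset.sum_congr rfl hterm, ← Finset.smul_sum, decompStar Φ (rcol P d)]
  -- eigenvectors
  have heigq : Φ.A *ᵥ rcol Q d = Φ.theta 0 • rcol Q d := by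
    have h := colA Φ Q (fun i => Φ.theta (d - i)) hAQ (le_refl d)
    rw [rcol_top Q (j := d+1) (by omega), add_zero] at h
    simpa using h
  have heigp : Φ.A *ᵥ rcol P d = Φ.theta d • rcol P d := by
    have h := colA Φ P Φ.theta hAP (le_refl d)
    rw [rcol_top P (j := d+1) (by omega), add_zero] at h
    exact h
  -- range characterizations
  have hrange0 : LinearMap.range (Φ.E 0).mulVecLin = Submodule.span K {rcol Q d} := by
    apply le_antisymm
    · rintro v ⟨w, rfl⟩
      rw [Matrix.mulVecLin_apply]
      have hv0 : Φ.A *ᵥ (Φ.E 0 *ᵥ w) = Φ.theta (d - d) • (Φ.E 0 *ᵥ w) := by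
        rw [Nat.sub_self]; exact E_eigen Φ (Nat.zero_le d) w
      obtain ⟨t, ht⟩ := lb_span Φ Q (fun i => Φ.theta (d - i)) hQ hAQ hμinj hv0
      rw [ht]
      exact Submodule.smul_mem _ t (Submodule.mem_span_singleton_self _)
    · rw [Submodule.span_le, Set.singleton_subset_iff]
      refine ⟨rcol Q d, ?_⟩
      rw [Matrix.mulVecLin_apply]
      exact E_fix Φ (Nat.zero_le d) heigq
  have hranged : LinearMap.range (Φ.E d).mulVecLin = Submodule.span K {rcol P d} := by
    apply le_antisymm
    · rintro v ⟨w, rfl⟩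
      rw [Matrix.mulVecLin_apply]
      have hv0 : Φ.A *ᵥ (Φ.E d *ᵥ w) = Φ.theta d • (Φ.E d *ᵥ w) :=
        E_eigen Φ (le_refl d) w
      obtain ⟨t, ht⟩ := lb_span Φ P Φ.theta hP hAP Φ.theta_inj hv0
      rw [ht]
      exact Submodule.smul_mem _ t (Submodule.mem_span_singleton_self _)
    · rw [Submodule.span_le, Set.singleton_subset_iff]
      refine ⟨rcol P d, ?_⟩
      rw [Matrix.mulVecLin_apply]
      exact E_fix Φ (le_refl d) heigp
  rw [hrange0, hranged, Submodule.map_span, Set.image_singleton, Matrix.mulVecLin_apply, hSq,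
    Submodule.span_singleton_smul_eq (Ne.isUnit hC0) _]
end
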